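/- arXiv:2101.03510 — 4 statements merged into one kernel-verified Lean document; each statement's English description precedes it below -/
import Mathlib

section
/- Let E be a real Banach space, and let 1 ≤ q_j ≤ p_j < ∞ for j = 1, 2 satisfy p_1 ≤ p_2, q_1 ≤ q_2, and 1/q_1 − 1/p_1 ≤ 1/q_2 − 1/p_2. Then ‖f‖_{p_2,q_2} ≤ ‖f‖_{p_1,q_1} for every f ∈ H[E] (with values in [0,∞]). In particular, H_{p_1,q_1}[E] ⊆ H_{p_2,q_2}[E]. -/
open scoped ENNReal

/-- A function `f : E* → ℝ` is positively homogeneous. -/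
def PosHomog {E : Type*} [NormedAddCommGroup E] [NormedSpace ℝ E]
    (f : (E →L[ℝ] ℝ) → ℝ) : Prop :=
  ∀ (c : ℝ), 0 ≤ c → ∀ φ : E →L[ℝ] ℝ, f (c • φ) = c * f φ

/-- The weak `q`-summing norm of a finite family in `E*`. -/
noncomputable def weakSumNorm {E : Type*} [NormedAddCommGroup E] [NormedSpace ℝ E]
    (q : ℝ) {n : ℕ} (xs : Fin n → (E →L[ℝ] ℝ)) : ℝ :=
  sSup ((fun x : E => (∑ k, |xs k x| ^ q) ^ (1 / q)) '' Metric.closedBall 0 1)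

/-- The `(p,q)`-summing norm of `f : E* → ℝ`, with values in `[0,∞]`. -/
noncomputable def pqNorm {E : Type*} [NormedAddCommGroup E] [NormedSpace ℝ E]
    (p q : ℝ) (f : (E →L[ℝ] ℝ) → ℝ) : ℝ≥0∞ :=
  ⨆ (n : ℕ) (xs : Fin n → (E →L[ℝ] ℝ)) (_ : weakSumNorm q xs ≤ 1),
    ENNReal.ofReal ((∑ k, |f (xs k)| ^ p) ^ (1 / p))

/-- Superadditivity of `x ↦ x^r` for `r ≥ 1`: `∑ aₖ^r ≤ (∑ aₖ)^r`. -/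
lemma sum_rpow_le_rpow_sum' {n : ℕ} (a : Fin n → ℝ) (ha : ∀ k, 0 ≤ a k) {r : ℝ} (hr : 1 ≤ r) :
    ∑ k, a k ^ r ≤ (∑ k, a k) ^ r := by
  have hr0 : 0 < r := lt_of_lt_of_le one_pos hr
  have hS : 0 ≤ ∑ k, a k := Finset.sum_nonneg fun k _ => ha k
  rcases eq_or_lt_of_le hS with hS0 | hS0
  · have hall : ∀ k ∈ Finset.univ, a k = 0 :=
      (Finset.sum_eq_zero_iff_of_nonneg (fun k _ => ha k)).mp hS0.symm
    rw [← hS0, Real.zero_rpow (ne_of_gt hr0)]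
    refine le_of_eq (Finset.sum_eq_zero fun k hk => ?_)
    rw [hall k hk, Real.zero_rpow (ne_of_gt hr0)]
  · have hstep : ∀ k, a k ^ r ≤ (∑ j, a j) ^ (r - 1) * a k := by
      intro k
      rcases eq_or_lt_of_le (ha k) with h0 | h0
      · rw [← h0, Real.zero_rpow (ne_of_gt hr0), mul_zero]
      · rw [show r = (r-1)+1 by ring, Real.rpow_add h0, Real.rpow_one]
        rw [show r - 1 + 1 - 1 = r - 1 by ring]
        refine mul_le_mul_of_nonneg_right ?_ (ha k)
        exact Real.rpow_le_rpow (ha k)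
          (Finset.single_le_sum (fun j _ => ha j) (Finset.mem_univ k)) (by linarith)
    calc ∑ k, a k ^ r ≤ ∑ k, (∑ j, a j) ^ (r - 1) * a k := Finset.sum_le_sum fun k _ => hstep k
      _ = (∑ j, a j) ^ (r - 1) * ∑ k, a k := by rw [← Finset.mul_sum]
      _ = (∑ j, a j) ^ r := by
          nth_rewrite 2 [show r = (r-1)+1 by ring]
          rw [Real.rpow_add hS0, Real.rpow_one]

/-- Monotonicity of discrete `ℓ^p` norms: for `0 < t ≤ p`, `‖a‖_p ≤ ‖a‖_t`. -/
lemma rpow_sum_rpow_le' {n : ℕ} (a : Fin n → ℝ) (ha : ∀ k, 0 ≤ a k) {t p : ℝ}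
    (ht : 0 < t) (htp : t ≤ p) :
    (∑ k, a k ^ p) ^ (1 / p) ≤ (∑ k, a k ^ t) ^ (1 / t) := by
  have hp : 0 < p := lt_of_lt_of_le ht htp
  have h1 : ∀ k, a k ^ p = (a k ^ t) ^ (p / t) := fun k => by
    rw [← Real.rpow_mul (ha k)]
    congr 1
    field_simp
  have h2 : ∑ k, (a k ^ t) ^ (p / t) ≤ (∑ k, a k ^ t) ^ (p / t) :=
    sum_rpow_le_rpow_sum' _ (fun k => Real.rpow_nonneg (ha k) t)
      ((one_le_div ht).mpr htp)
  have hsn : 0 ≤ ∑ k, a k ^ t := Finset.sum_nonneg fun k _ => Real.rpow_nonneg (ha k) t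
  calc (∑ k, a k ^ p) ^ (1 / p) = (∑ k, (a k ^ t) ^ (p / t)) ^ (1 / p) := by
        rw [Finset.sum_congr rfl fun k _ => h1 k]
    _ ≤ ((∑ k, a k ^ t) ^ (p / t)) ^ (1 / p) := by
        refine Real.rpow_le_rpow ?_ h2 (by positivity)
        exact Finset.sum_nonneg fun k _ => Real.rpow_nonneg (Real.rpow_nonneg (ha k) t) _
    _ = (∑ k, a k ^ t) ^ (1 / t) := by
        rw [← Real.rpow_mul hsn]
        congr 1
        field_simp

/-- Each value of the defining function on the unit ball is at most `weakSumNorm`. -/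
lemma le_weakSumNorm' {E : Type*} [NormedAddCommGroup E] [NormedSpace ℝ E]
    {q : ℝ} (hq : 0 < q) {n : ℕ} (xs : Fin n → (E →L[ℝ] ℝ)) {x : E} (hx : ‖x‖ ≤ 1) :
    (∑ k, |xs k x| ^ q) ^ (1 / q) ≤ weakSumNorm q xs := by
  apply le_csSup
  · refine ⟨(∑ k, ‖xs k‖ ^ q) ^ (1 / q), ?_⟩
    rintro _ ⟨y, hy, rfl⟩
    have hy1 : ‖y‖ ≤ 1 := by simpa [Metric.mem_closedBall] using hy
    refine Real.rpow_le_rpow (Finset.sum_nonneg fun k _ => Real.rpow_nonneg (abs_nonneg _) _)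
      (Finset.sum_le_sum fun k _ => ?_) (by positivity)
    refine Real.rpow_le_rpow (abs_nonneg _) ?_ hq.le
    calc |xs k y| = ‖xs k y‖ := (Real.norm_eq_abs _).symm
      _ ≤ ‖xs k‖ * ‖y‖ := (xs k).le_opNorm y
      _ ≤ ‖xs k‖ * 1 := by nlinarith [norm_nonneg (xs k)]
      _ = ‖xs k‖ := mul_one _
  · exact ⟨x, by simpa [Metric.mem_closedBall], rfl⟩

/-- Each admissible family contributes a lower bound to `pqNorm`. -/
lemma term_le_pqNorm' {E : Type*} [NormedAddCommGroup E] [NormedSpace ℝ E]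
    (p q : ℝ) (f : (E →L[ℝ] ℝ) → ℝ) {n : ℕ} (xs : Fin n → (E →L[ℝ] ℝ))
    (hw : weakSumNorm q xs ≤ 1) :
    ENNReal.ofReal ((∑ k, |f (xs k)| ^ p) ^ (1 / p)) ≤ pqNorm p q f :=
  le_iSup_of_le n (le_iSup_of_le xs (le_iSup_of_le hw le_rfl))

/-- Inclusion lemma. If `1 ≤ q_j ≤ p_j < ∞` for `j = 1,2` with
`p₁ ≤ p₂`, `q₁ ≤ q₂` and `1/q₁ − 1/p₁ ≤ 1/q₂ − 1/p₂`, then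
`‖f‖_{p₂,q₂} ≤ ‖f‖_{p₁,q₁}` for every `f ∈ H[E]` (values in `[0,∞]`); in particular
`H_{p₁,q₁}[E] ⊆ H_{p₂,q₂}[E]`. -/
theorem pqNorm_inclusion
    (E : Type*) [NormedAddCommGroup E] [NormedSpace ℝ E] [CompleteSpace E]
    (p₁ q₁ p₂ q₂ : ℝ)
    (hq₁ : 1 ≤ q₁) (hqp₁ : q₁ ≤ p₁) (hq₂ : 1 ≤ q₂) (hqp₂ : q₂ ≤ p₂)
    (hp : p₁ ≤ p₂) (hq : q₁ ≤ q₂)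
    (hdefect : 1 / q₁ - 1 / p₁ ≤ 1 / q₂ - 1 / p₂)
    (f : (E →L[ℝ] ℝ) → ℝ) (hf : PosHomog f) :
    pqNorm p₂ q₂ f ≤ pqNorm p₁ q₁ f ∧
      (pqNorm p₁ q₁ f < ⊤ → pqNorm p₂ q₂ f < ⊤) := by
  have hq₁0 : (0:ℝ) < q₁ := lt_of_lt_of_le one_pos hq₁
  have hq₂0 : (0:ℝ) < q₂ := lt_of_lt_of_le one_pos hq₂
  have hp₁0 : (0:ℝ) < p₁ := lt_of_lt_of_le hq₁0 hqp₁
  have hp₂0 : (0:ℝ) < p₂ := lt_of_lt_of_le hq₂0 hqp₂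
  have main : pqNorm p₂ q₂ f ≤ pqNorm p₁ q₁ f := by
    refine iSup_le fun n => iSup_le fun xs => iSup_le fun hw => ?_
    have ha : ∀ k : Fin n, 0 ≤ |f (xs k)| := fun k => abs_nonneg _
    rcases eq_or_lt_of_le hq with hqe | hql
    · -- q₁ = q₂ : direct comparison
      subst hqe
      refine le_trans ?_ (term_le_pqNorm' p₁ q₁ f xs hw)
      exact ENNReal.ofReal_le_ofReal
        (rpow_sum_rpow_le' (fun k => |f (xs k)|) ha hp₁0 hp)
    · -- q₁ < q₂
      set s : ℝ := (1/q₁ - 1/q₂)⁻¹ with hs_def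
      set t : ℝ := (1/p₁ - 1/q₁ + 1/q₂)⁻¹ with ht_def
      have hsd : 0 < 1/q₁ - 1/q₂ := by
        rw [sub_pos, div_lt_div_iff₀ hq₂0 hq₁0]
        linarith
      have hs0 : 0 < s := inv_pos.mpr hsd
      have hs : 1/s = 1/q₁ - 1/q₂ := by rw [hs_def, one_div, inv_inv]
      have htd : 0 < 1/p₁ - 1/q₁ + 1/q₂ := by
        have h2 : (0:ℝ) < 1/p₂ := by positivity
        linarith
      have ht0 : 0 < t := inv_pos.mpr htd
      have ht : 1/t = 1/p₁ - 1/q₁ + 1/q₂ := by rw [ht_def, one_div, inv_inv]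
      have htp₂ : t ≤ p₂ := by
        have h1 : 1/p₂ ≤ 1/t := by rw [ht]; linarith
        rw [div_le_div_iff₀ hp₂0 ht0] at h1
        linarith
      have hsne : s ≠ 0 := ne_of_gt hs0
      have htne : t ≠ 0 := ne_of_gt ht0
      have hp₁ne : p₁ ≠ 0 := ne_of_gt hp₁0
      have hst : 1/s = 1/p₁ - 1/t := by rw [hs, ht]; ring
      -- key exponent identities
      have key1 : t/s * p₁ + p₁ = t := by
        have h := hst
        field_simp at h
        field_simp
        nlinarith [h]
      have key2 : p₁/t = 1 - p₁/s := by
        have h := hst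
        field_simp at h
        field_simp
        nlinarith [h]
      set A : ℝ := ∑ k, |f (xs k)| ^ t with hA_def
      have hA0 : 0 ≤ A := Finset.sum_nonneg fun k _ => Real.rpow_nonneg (ha k) t
      rcases eq_or_lt_of_le hA0 with hA | hA
      · -- all values vanish
        have hall : ∀ k, |f (xs k)| = 0 := by
          intro k
          have h := (Finset.sum_eq_zero_iff_of_nonneg
            (fun k _ => Real.rpow_nonneg (ha k) t)).mp hA.symm k (Finset.mem_univ k)
          by_contra hne
          have hpos : 0 < |f (xs k)| := lt_of_le_of_ne (ha k) (Ne.symm hne)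
          exact absurd h (ne_of_gt (Real.rpow_pos_of_pos hpos t))
        have hz : (∑ k, |f (xs k)| ^ p₂) = 0 := Finset.sum_eq_zero fun k _ => by
          rw [hall k]; exact Real.zero_rpow (ne_of_gt hp₂0)
        rw [hz, Real.zero_rpow (by positivity : (1:ℝ)/p₂ ≠ 0)]
        simp
      · -- main case
        set σ : Fin n → ℝ := fun k => |f (xs k)| ^ (t/s) / A ^ (1/s) with hσ_def
        have hσ0 : ∀ k, 0 ≤ σ k := fun k =>
          div_nonneg (Real.rpow_nonneg (ha k) _) (Real.rpow_nonneg hA0 _)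
        have hσs : ∀ k, σ k ^ s = |f (xs k)| ^ t / A := by
          intro k
          show (|f (xs k)| ^ (t/s) / A ^ (1/s)) ^ s = |f (xs k)| ^ t / A
          rw [Real.div_rpow (Real.rpow_nonneg (ha k) _) (Real.rpow_nonneg hA0 _),
            ← Real.rpow_mul (ha k), ← Real.rpow_mul hA0,
            div_mul_cancel₀ _ hsne, one_div_mul_cancel hsne, Real.rpow_one]
        have hsig : ∑ k, σ k ^ s = 1 := by
          rw [Finset.sum_congr rfl fun k _ => hσs k, ← Finset.sum_div, ← hA_def,
            div_self (ne_of_gt hA)]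
        -- the new family has weak q₁-norm at most 1
        have hconj : Real.HolderConjugate (s/q₁) (q₂/q₁) := by
          rw [Real.holderConjugate_iff]
          constructor
          · rw [lt_div_iff₀ hq₁0, one_mul]
            have h1 : 1/s < 1/q₁ := by
              rw [hs]
              have : (0:ℝ) < 1/q₂ := by positivity
              linarith
            rw [div_lt_div_iff₀ hs0 hq₁0] at h1
            linarith
          · rw [inv_div, inv_div]
            have h1 : q₁ * (1/s) + q₁ * (1/q₂) = 1 := by
              rw [hs]
              field_simp
              ring
            calc q₁/s + q₁/q₂ = q₁*(1/s) + q₁*(1/q₂) := by ring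
              _ = 1 := h1
        have hw' : weakSumNorm q₁ (fun k => σ k • xs k) ≤ 1 := by
          refine Real.sSup_le ?_ zero_le_one
          rintro v ⟨x, hx, rfl⟩
          have hx1 : ‖x‖ ≤ 1 := by simpa [Metric.mem_closedBall] using hx
          have hb2 : ∑ k, |xs k x| ^ q₂ ≤ 1 := by
            have h1 : (∑ k, |xs k x| ^ q₂) ^ (1/q₂) ≤ 1 :=
              le_trans (le_weakSumNorm' hq₂0 xs hx1) hw
            have hsn : 0 ≤ ∑ k, |xs k x| ^ q₂ :=
              Finset.sum_nonneg fun k _ => Real.rpow_nonneg (abs_nonneg _) _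
            have h2 := Real.rpow_le_rpow (Real.rpow_nonneg hsn _) h1 hq₂0.le
            rwa [← Real.rpow_mul hsn, one_div_mul_cancel (ne_of_gt hq₂0),
              Real.rpow_one, Real.one_rpow] at h2
          have hbn : ∀ k, (0:ℝ) ≤ |xs k x| := fun k => abs_nonneg _
          have habs : ∀ k : Fin n, |(σ k • xs k) x| = σ k * |xs k x| := by
            intro k
            rw [ContinuousLinearMap.smul_apply, smul_eq_mul, abs_mul,
              abs_of_nonneg (hσ0 k)]
          have hmain : ∑ k, (σ k * |xs k x|) ^ q₁ ≤ 1 := by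
            have hrw : ∀ k : Fin n, (σ k * |xs k x|) ^ q₁ = σ k ^ q₁ * |xs k x| ^ q₁ :=
              fun k => Real.mul_rpow (hσ0 k) (hbn k)
            rw [Finset.sum_congr rfl fun k _ => hrw k]
            have hH := Real.inner_le_Lp_mul_Lq_of_nonneg Finset.univ hconj
              (f := fun k => σ k ^ q₁) (g := fun k => |xs k x| ^ q₁)
              (fun k _ => Real.rpow_nonneg (hσ0 k) q₁)
              (fun k _ => Real.rpow_nonneg (hbn k) q₁)
            refine le_trans hH ?_
            have e1 : ∀ k : Fin n, (σ k ^ q₁) ^ (s/q₁) = σ k ^ s := fun k => by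
              rw [← Real.rpow_mul (hσ0 k)]
              congr 1
              field_simp
            have e2 : ∀ k : Fin n, (|xs k x| ^ q₁) ^ (q₂/q₁) = |xs k x| ^ q₂ := fun k => by
              rw [← Real.rpow_mul (hbn k)]
              congr 1
              field_simp
            rw [Finset.sum_congr rfl fun k _ => e1 k, Finset.sum_congr rfl fun k _ => e2 k,
              hsig, Real.one_rpow, one_mul]
            refine Real.rpow_le_one
              (Finset.sum_nonneg fun k _ => Real.rpow_nonneg (hbn k) _) hb2 ?_
            positivity
          have hsn2 : 0 ≤ ∑ k, (σ k * |xs k x|) ^ q₁ :=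
            Finset.sum_nonneg fun k _ => Real.rpow_nonneg (mul_nonneg (hσ0 k) (hbn k)) _
          calc (∑ k, |(σ k • xs k) x| ^ q₁) ^ (1/q₁)
              = (∑ k, (σ k * |xs k x|) ^ q₁) ^ (1/q₁) := by
                rw [Finset.sum_congr rfl fun k _ => by rw [habs k]]
            _ ≤ 1 := Real.rpow_le_one hsn2 hmain (by positivity)
        have hterm := term_le_pqNorm' p₁ q₁ f (fun k => σ k • xs k) hw'
        have hfa : ∀ k : Fin n, |f (σ k • xs k)| = σ k * |f (xs k)| := fun k => by
          rw [hf (σ k) (hσ0 k) (xs k), abs_mul, abs_of_nonneg (hσ0 k)]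
        have hcomp : (∑ k, |f (σ k • xs k)| ^ p₁) ^ (1/p₁) = A ^ (1/t) := by
          have e1 : ∀ k : Fin n, |f (σ k • xs k)| ^ p₁ = |f (xs k)| ^ t / A ^ (p₁/s) := by
            intro k
            rw [hfa k, Real.mul_rpow (hσ0 k) (ha k)]
            show (|f (xs k)| ^ (t/s) / A ^ (1/s)) ^ p₁ * |f (xs k)| ^ p₁ = _
            rw [Real.div_rpow (Real.rpow_nonneg (ha k) _) (Real.rpow_nonneg hA0 _),
              ← Real.rpow_mul (ha k), ← Real.rpow_mul hA0]
            have hne : t/s*p₁ + p₁ ≠ 0 := by rw [key1]; exact htne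
            rw [div_mul_eq_mul_div, ← Real.rpow_add' (ha k) hne, key1]
            congr 2
            ring
          rw [Finset.sum_congr rfl fun k _ => e1 k, ← Finset.sum_div, ← hA_def]
          have e2 : A / A ^ (p₁/s) = A ^ (p₁/t) := by
            rw [key2, Real.rpow_sub hA, Real.rpow_one]
          rw [e2, ← Real.rpow_mul hA0]
          congr 1
          field_simp
        refine le_trans ?_ hterm
        apply ENNReal.ofReal_le_ofReal
        rw [hcomp]
        exact rpow_sum_rpow_le' (fun k => |f (xs k)|) ha ht0 htp₂
  exact ⟨main, fun h => lt_of_le_of_lt main h⟩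
end

section
/- Let E be a real Banach space and r ≥ 2, and suppose there is a constant K > 0 such that (Σ_{k=1}^n ‖x_k*‖^r)^{1/r} ≤ K · w_1(x_1*,…,x_n*) for every finite sequence x_1*,…,x_n* in E* (this holds whenever E* has finite cotype r). Letate 1 ≤ q < p < ∞ satisfy 1/q − 1/p ≥ 1 − 1/r. Then H_{p,q}[E] = H_∞[E], and ‖f‖_∞ ≤ ‖f‖_{p,q} ≤ K‖f‖_∞ for every f ∈ H_∞[E]. -/
open scoped ENNReal

/-- The supremum norm `‖f‖_∞ = sup_{‖x*‖ ≤ 1} |f(x*)|`, with values in `[0,∞]`. -/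
noncomputable def supNormE {E : Type*} [NormedAddCommGroup E] [NormedSpace ℝ E]
    (f : (E →L[ℝ] ℝ) → ℝ) : ℝ≥0∞ :=
  ⨆ (φ : E →L[ℝ] ℝ) (_ : ‖φ‖ ≤ 1), ENNReal.ofReal |f φ|

/-- Superadditivity of `x ↦ x ^ t` (`t ≥ 1`) over finite sums of nonnegative reals. -/
lemma sum_rpow_le_rpow_sum'_s15 {n : ℕ} (b : Fin n → ℝ) (hb : ∀ i, 0 ≤ b i) {t : ℝ} (ht : 1 ≤ t) :
    ∑ i, b i ^ t ≤ (∑ i, b i) ^ t := by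
  set S := ∑ i, b i with hSdef
  have hS : 0 ≤ S := Finset.sum_nonneg fun i _ => hb i
  rcases eq_or_lt_of_le hS with hS0 | hS0
  · have hall : ∀ i, b i = 0 := by
      intro i
      have := Finset.single_le_sum (fun j (_ : j ∈ Finset.univ) => hb j) (Finset.mem_univ i)
      have := hb i; linarith [hS0]
    simp only [hall]
    rw [Real.zero_rpow (by linarith : t ≠ 0)]
    simp only [Finset.sum_const_zero]
    exact Real.rpow_nonneg hS t
  · have key : ∀ i, b i ^ t ≤ S ^ (t - 1) * b i := by
      intro i
      rcases eq_or_lt_of_le (hb i) with h0 | h0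
      · rw [← h0, Real.zero_rpow (by linarith : t ≠ 0)]
        positivity
      · have hbS : b i ≤ S := Finset.single_le_sum (fun j _ => hb j) (Finset.mem_univ i)
        calc b i ^ t = b i ^ (t - 1) * b i := by
              rw [← Real.rpow_add_one (ne_of_gt h0) (t - 1), sub_add_cancel]
          _ ≤ S ^ (t - 1) * b i :=
              mul_le_mul_of_nonneg_right
                (Real.rpow_le_rpow (le_of_lt h0) hbS (by linarith)) (hb i)
    calc ∑ i, b i ^ t ≤ ∑ i, S ^ (t - 1) * b i := Finset.sum_le_sum fun i _ => key i
      _ = S ^ (t - 1) * S := by rw [← Finset.mul_sum]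
      _ = S ^ t := by rw [← Real.rpow_add_one (ne_of_gt hS0)]; norm_num

/-- Monotonicity (in the exponent) of the `ℓ^p` norms of a finite nonnegative sequence. -/
lemma lp_mono {n : ℕ} (a : Fin n → ℝ) (ha : ∀ i, 0 ≤ a i) {s p : ℝ} (hs : 0 < s) (hsp : s ≤ p) :
    (∑ i, a i ^ p) ^ (1 / p) ≤ (∑ i, a i ^ s) ^ (1 / s) := by
  have hp : 0 < p := lt_of_lt_of_le hs hsp
  have ht : 1 ≤ p / s := (one_le_div hs).2 hsp
  have h1 : ∀ i, a i ^ p = (a i ^ s) ^ (p / s) := by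
    intro i
    rw [← Real.rpow_mul (ha i)]
    congr 1
    field_simp
  have h2 : ∑ i, a i ^ p ≤ (∑ i, a i ^ s) ^ (p / s) := by
    simp only [h1]
    exact sum_rpow_le_rpow_sum'_s15 (fun i => a i ^ s) (fun i => Real.rpow_nonneg (ha i) s) ht
  calc (∑ i, a i ^ p) ^ (1 / p)
      ≤ ((∑ i, a i ^ s) ^ (p / s)) ^ (1 / p) :=
        Real.rpow_le_rpow (Finset.sum_nonneg fun i _ => Real.rpow_nonneg (ha i) p) h2
          (by positivity)
    _ = (∑ i, a i ^ s) ^ (1 / s) := by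
        rw [← Real.rpow_mul (Finset.sum_nonneg fun i _ => Real.rpow_nonneg (ha i) s)]
        congr 1
        field_simp

section AuxE
variable {E : Type*} [NormedAddCommGroup E] [NormedSpace ℝ E]

/-- Pointwise values on the unit ball are bounded by the weak summing norm. -/
lemma ptwise_le_weak (q : ℝ) (hq0 : 0 ≤ q) {n : ℕ} (xs : Fin n → (E →L[ℝ] ℝ))
    (x : E) (hx : ‖x‖ ≤ 1) :
    (∑ k, |xs k x| ^ q) ^ (1 / q) ≤ weakSumNorm q xs := by
  apply le_csSup
  · refine ⟨(∑ k, ‖xs k‖ ^ q) ^ (1 / q), ?_⟩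
    rintro v ⟨y, hy, rfl⟩
    have hy' : ‖y‖ ≤ 1 := by simpa [Metric.mem_closedBall, dist_zero_right] using hy
    apply Real.rpow_le_rpow (Finset.sum_nonneg fun k _ => Real.rpow_nonneg (abs_nonneg _) q)
      _ (by positivity)
    apply Finset.sum_le_sum
    intro k _
    apply Real.rpow_le_rpow (abs_nonneg _) _ hq0
    calc |xs k y| = ‖xs k y‖ := (Real.norm_eq_abs _).symm
      _ ≤ ‖xs k‖ * ‖y‖ := (xs k).le_opNorm y
      _ ≤ ‖xs k‖ * 1 := mul_le_mul_of_nonneg_left hy' (norm_nonneg _)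
      _ = ‖xs k‖ := mul_one _
  · exact ⟨x, by simpa [Metric.mem_closedBall, dist_zero_right] using hx, rfl⟩

/-- The key estimate. -/
lemma key_bound (r : ℝ) (hr : 2 ≤ r) (K : ℝ) (hK : 0 < K)
    (hcotype : ∀ (n : ℕ) (xs : Fin n → (E →L[ℝ] ℝ)),
      (∑ k, ‖xs k‖ ^ r) ^ (1 / r) ≤ K * weakSumNorm 1 xs)
    (p q : ℝ) (hq : 1 ≤ q) (hqp : q < p)
    (hdefect : 1 - 1 / r ≤ 1 / q - 1 / p)
    {n : ℕ} (xs : Fin n → (E →L[ℝ] ℝ)) (hw : weakSumNorm q xs ≤ 1) :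
    (∑ k, ‖xs k‖ ^ p) ^ (1 / p) ≤ K := by
  have hr0 : (0:ℝ) < r := by linarith
  have hq0 : (0:ℝ) < q := by linarith
  have hp0 : (0:ℝ) < p := by linarith
  have hp0' : (0:ℝ) < 1 / p := by positivity
  have hptw : ∀ x : E, ‖x‖ ≤ 1 → (∑ k, |xs k x| ^ q) ^ (1 / q) ≤ 1 :=
    fun x hx => le_trans (ptwise_le_weak q hq0.le xs x hx) hw
  rcases eq_or_lt_of_le hq with hq1 | hq1
  · -- q = 1
    have hrp : r ≤ p := by
      have h1 : 1 / p ≤ 1 / r := by rw [← hq1] at hdefect; linarith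
      exact le_of_one_div_le_one_div hp0 h1
    calc (∑ k, ‖xs k‖ ^ p) ^ (1 / p) ≤ (∑ k, ‖xs k‖ ^ r) ^ (1 / r) :=
          lp_mono _ (fun k => norm_nonneg _) hr0 hrp
      _ ≤ K * weakSumNorm 1 xs := hcotype n xs
      _ ≤ K * 1 := mul_le_mul_of_nonneg_left (by rw [← hq1] at hw; exact hw) hK.le
      _ = K := mul_one K
  · -- q > 1
    set q' := Real.conjExponent q with hq'def
    have hconj : q.HolderConjugate q' := Real.HolderConjugate.conjExponent hq1
    have conj : q'.HolderConjugate q := hconj.symm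
    have hq'pos : 0 < q' := conj.pos
    have hq'inv : 1 / q' = 1 - 1 / q := by
      rw [one_div, one_div, ← hconj.one_sub_inv]
    have hxpos : (0:ℝ) < 1 / r + 1 / q - 1 := by linarith
    set s := 1 / (1 / r + 1 / q - 1) with hsdef
    have hs : 0 < s := by positivity
    have hsinv : 1 / s = 1 / r + 1 / q - 1 := one_div_one_div _
    have hsp : s ≤ p := by
      apply le_of_one_div_le_one_div hp0
      rw [hsinv]; linarith
    set a : Fin n → ℝ := fun k => ‖xs k‖ with hadef
    have hann : ∀ k, (0:ℝ) ≤ a k := fun k => norm_nonneg _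
    set S := ∑ k, a k ^ s with hSdef
    have hSnn : 0 ≤ S := Finset.sum_nonneg fun k _ => Real.rpow_nonneg (hann k) s
    have hmain : S ^ (1 / s) ≤ K := by
      rcases eq_or_lt_of_le hSnn with hS0 | hSpos
      · rw [← hS0, Real.zero_rpow (by positivity : (1:ℝ)/s ≠ 0)]
        exact hK.le
      · set T := S ^ (1 / q') with hTdef
        have hT : 0 < T := Real.rpow_pos_of_pos hSpos _
        set μ : Fin n → ℝ := fun k => (a k ^ (s / q')) / T with hμdef
        have hμ : ∀ k, 0 ≤ μ k := fun k => div_nonneg (Real.rpow_nonneg (hann k) _) hT.le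
        have hμq' : ∀ k, μ k ^ q' = a k ^ s / S := by
          intro k
          rw [hμdef]
          rw [Real.div_rpow (Real.rpow_nonneg (hann k) _) hT.le]
          rw [← Real.rpow_mul (hann k), div_mul_cancel₀ s hq'pos.ne']
          rw [hTdef, ← Real.rpow_mul hSnn, one_div_mul_cancel hq'pos.ne', Real.rpow_one]
        have hμsum : ∑ k, μ k ^ q' = 1 := by
          simp only [hμq']
          rw [← Finset.sum_div, ← hSdef, div_self hSpos.ne']
        have hyw : weakSumNorm 1 (fun k => μ k • xs k) ≤ 1 := by
          apply Real.sSup_le _ zero_le_one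
          rintro v ⟨x, hx, rfl⟩
          have hx' : ‖x‖ ≤ 1 := by simpa [Metric.mem_closedBall, dist_zero_right] using hx
          simp only [ContinuousLinearMap.smul_apply, smul_eq_mul, Real.rpow_one]
          rw [one_div_one, Real.rpow_one]
          have habs : ∀ k, |μ k * xs k x| = μ k * |xs k x| := by
            intro k; rw [abs_mul, abs_of_nonneg (hμ k)]
          calc ∑ k, |μ k * xs k x| = ∑ k, μ k * |xs k x| := by simp only [habs]
            _ ≤ (∑ k, μ k ^ q') ^ (1 / q') * (∑ k, |xs k x| ^ q) ^ (1 / q) :=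
                Real.inner_le_Lp_mul_Lq_of_nonneg Finset.univ conj
                  (fun k _ => hμ k) (fun k _ => abs_nonneg _)
            _ ≤ 1 * 1 := by
                rw [hμsum, Real.one_rpow]
                exact mul_le_mul_of_nonneg_left (hptw x hx') zero_le_one
            _ = 1 := mul_one 1
        have hcot := hcotype n (fun k => μ k • xs k)
        have h2 : 1 / r - 1 / q' = 1 / s := by rw [hq'inv, hsinv]; ring
        have hexp : s / q' + 1 = s / r := by
          have h3 : s / r - s / q' = 1 := by
            have h4 : s / r - s / q' = s * (1 / r - 1 / q') := by ring
            rw [h4, h2, mul_one_div, div_self hs.ne']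
          linarith
        have hnorm : ∀ k, ‖μ k • xs k‖ ^ r = a k ^ s / T ^ r := by
          intro k
          have step1 : ‖μ k • xs k‖ = μ k * a k := by
            rw [norm_smul (μ k) (xs k), Real.norm_eq_abs, abs_of_nonneg (hμ k)]
          have step2 : μ k * a k = a k ^ (s / r) / T := by
            show a k ^ (s / q') / T * a k = a k ^ (s / r) / T
            rw [div_mul_eq_mul_div]
            congr 1
            calc a k ^ (s / q') * a k = a k ^ (s / q') * a k ^ (1:ℝ) := by
                  rw [Real.rpow_one]
              _ = a k ^ (s / q' + 1) := (Real.rpow_add' (hann k)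
                  (by rw [hexp]; positivity)).symm
              _ = a k ^ (s / r) := by rw [hexp]
          rw [step1, step2]
          rw [Real.div_rpow (Real.rpow_nonneg (hann k) _) hT.le,
            ← Real.rpow_mul (hann k), div_mul_cancel₀ s hr0.ne']
        have hsum_norm : ∑ k, ‖μ k • xs k‖ ^ r = S ^ (1 - r / q') := by
          simp only [hnorm]
          rw [← Finset.sum_div, ← hSdef]
          rw [hTdef, ← Real.rpow_mul hSnn, show (1 / q') * r = r / q' from by ring,
            Real.rpow_sub hSpos, Real.rpow_one]
        have hfin : (S ^ (1 - r / q')) ^ (1 / r) = S ^ (1 / s) := by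
          rw [← Real.rpow_mul hSnn]
          congr 1
          rw [← h2]
          field_simp
        calc S ^ (1 / s) = (∑ k, ‖μ k • xs k‖ ^ r) ^ (1 / r) := by
              rw [hsum_norm, hfin]
          _ ≤ K * weakSumNorm 1 (fun k => μ k • xs k) := hcot
          _ ≤ K * 1 := mul_le_mul_of_nonneg_left hyw hK.le
          _ = K := mul_one K
    calc (∑ k, a k ^ p) ^ (1 / p) ≤ S ^ (1 / s) := lp_mono a hann hs hsp
      _ ≤ K := hmain

end AuxE

/-- Suppose `E*` has finite cotype `r ≥ 2`, witnessed by a constant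
`K > 0` with `(Σ‖x_k*‖^r)^{1/r} ≤ K·w₁(x₁*,…,x_n*)` for all finite families in `E*`.
If `1 ≤ q < p < ∞` satisfy `1/q − 1/p ≥ 1 − 1/r`, then `H_{p,q}[E] = H_∞[E]` with
`‖f‖_∞ ≤ ‖f‖_{p,q} ≤ K·‖f‖_∞` for every `f ∈ H_∞[E]`. -/
theorem Hpq_eq_Hinfty_of_cotype
    (E : Type*) [NormedAddCommGroup E] [NormedSpace ℝ E] [CompleteSpace E]
    (r : ℝ) (hr : 2 ≤ r) (K : ℝ) (hK : 0 < K)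
    (hcotype : ∀ (n : ℕ) (xs : Fin n → (E →L[ℝ] ℝ)),
      (∑ k, ‖xs k‖ ^ r) ^ (1 / r) ≤ K * weakSumNorm 1 xs)
    (p q : ℝ) (hq : 1 ≤ q) (hqp : q < p)
    (hdefect : 1 - 1 / r ≤ 1 / q - 1 / p) :
    ∀ f : (E →L[ℝ] ℝ) → ℝ, PosHomog f →
      supNormE f ≤ pqNorm p q f ∧
      pqNorm p q f ≤ ENNReal.ofReal K * supNormE f ∧
      (pqNorm p q f < ⊤ ↔ supNormE f < ⊤) := by
  intro f hposhom
  have hq0 : (0:ℝ) < q := by linarith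
  have hp0 : (0:ℝ) < p := by linarith
  have hf0 : f 0 = 0 := by
    have h := hposhom 0 le_rfl 0
    simpa using h
  have part1 : supNormE f ≤ pqNorm p q f := by
    apply iSup_le; intro φ; apply iSup_le; intro hφ
    set xs : Fin 1 → (E →L[ℝ] ℝ) := fun _ => φ with hxs
    have hxw : weakSumNorm q xs ≤ 1 := by
      apply Real.sSup_le _ zero_le_one
      rintro v ⟨x, hx, rfl⟩
      have hx' : ‖x‖ ≤ 1 := by simpa [Metric.mem_closedBall, dist_zero_right] using hx
      simp only [Fin.sum_univ_one]
      have heq : (|xs 0 x| ^ q) ^ (1 / q) = |φ x| := by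
        rw [one_div, Real.rpow_rpow_inv (abs_nonneg _) hq0.ne']
      rw [heq]
      calc |φ x| = ‖φ x‖ := (Real.norm_eq_abs _).symm
        _ ≤ ‖φ‖ * ‖x‖ := φ.le_opNorm x
        _ ≤ 1 * 1 := mul_le_mul hφ hx' (norm_nonneg _) zero_le_one
        _ = 1 := mul_one 1
    have heq2 : ENNReal.ofReal |f φ| =
        ENNReal.ofReal ((∑ k, |f (xs k)| ^ p) ^ (1 / p)) := by
      congr 1
      rw [Fin.sum_univ_one, one_div, Real.rpow_rpow_inv (abs_nonneg _) hp0.ne']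
    rw [heq2]
    exact le_iSup_of_le 1 (le_iSup_of_le xs (le_iSup_of_le hxw le_rfl))
  have part2 : pqNorm p q f ≤ ENNReal.ofReal K * supNormE f := by
    by_cases htop : supNormE f = ⊤
    · rw [htop, ENNReal.mul_top (by simpa [ENNReal.ofReal_eq_zero, not_le] using hK)]
      exact le_top
    · set M := (supNormE f).toReal with hM
      have hM0 : 0 ≤ M := ENNReal.toReal_nonneg
      have hbound : ∀ φ : E →L[ℝ] ℝ, ‖φ‖ ≤ 1 → |f φ| ≤ M := by
        intro φ hφ
        have h1 : ENNReal.ofReal |f φ| ≤ supNormE f :=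
          le_iSup_of_le φ (le_iSup_of_le hφ le_rfl)
        have h2 := ENNReal.toReal_mono htop h1
        rwa [ENNReal.toReal_ofReal (abs_nonneg _)] at h2
      have hlin : ∀ φ : E →L[ℝ] ℝ, |f φ| ≤ M * ‖φ‖ := by
        intro φ
        rcases eq_or_ne φ 0 with h0 | h0
        · simp [h0, hf0]
        · have hn : 0 < ‖φ‖ := norm_pos_iff.2 h0
          set ψ := ‖φ‖⁻¹ • φ with hψ
          have hψn : ‖ψ‖ = 1 := norm_smul_inv_norm h0
          have hφψ : φ = ‖φ‖ • ψ := by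
            rw [hψ, smul_smul, mul_inv_cancel₀ hn.ne', one_smul]
          calc |f φ| = |f (‖φ‖ • ψ)| := by rw [← hφψ]
            _ = ‖φ‖ * |f ψ| := by
                rw [hposhom ‖φ‖ (norm_nonneg _) ψ, abs_mul,
                  abs_of_nonneg (norm_nonneg _)]
            _ ≤ ‖φ‖ * M := mul_le_mul_of_nonneg_left (hbound ψ (le_of_eq hψn))
                (norm_nonneg _)
            _ = M * ‖φ‖ := mul_comm _ _
      have hpq : pqNorm p q f ≤ ENNReal.ofReal (K * M) := by
        apply iSup_le; intro n; apply iSup_le; intro xs; apply iSup_le; intro hw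
        apply ENNReal.ofReal_le_ofReal
        have hK' := key_bound r hr K hK hcotype p q hq hqp hdefect xs hw
        calc (∑ k, |f (xs k)| ^ p) ^ (1 / p)
            ≤ (∑ k, (M * ‖xs k‖) ^ p) ^ (1 / p) := by
              apply Real.rpow_le_rpow
                (Finset.sum_nonneg fun k _ => Real.rpow_nonneg (abs_nonneg _) p)
                (Finset.sum_le_sum fun k _ =>
                  Real.rpow_le_rpow (abs_nonneg _) (hlin (xs k)) hp0.le)
                (by positivity)
          _ = M * (∑ k, ‖xs k‖ ^ p) ^ (1 / p) := by
              have hmr : ∀ k : Fin n, (M * ‖xs k‖) ^ p = M ^ p * ‖xs k‖ ^ p :=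
                fun k => Real.mul_rpow hM0 (norm_nonneg _)
              simp only [hmr]
              rw [← Finset.mul_sum,
                Real.mul_rpow (Real.rpow_nonneg hM0 p)
                  (Finset.sum_nonneg fun k _ => Real.rpow_nonneg (norm_nonneg _) p),
                one_div, Real.rpow_rpow_inv hM0 hp0.ne']
          _ ≤ M * K := mul_le_mul_of_nonneg_left hK' hM0
          _ = K * M := mul_comm _ _
      calc pqNorm p q f ≤ ENNReal.ofReal (K * M) := hpq
        _ = ENNReal.ofReal K * ENNReal.ofReal M := ENNReal.ofReal_mul hK.le
        _ = ENNReal.ofReal K * supNormE f := by rw [hM, ENNReal.ofReal_toReal htop]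
  refine ⟨part1, part2, ?_⟩
  constructor
  · intro h
    exact lt_of_le_of_lt part1 h
  · intro h
    exact lt_of_le_of_lt part2 (ENNReal.mul_lt_top ENNReal.ofReal_lt_top h)
end

section
/- Let E be a real Banach space, 1 ≤ p < ∞, and let μ be a regular Borel probability measure on B_{E**} (with the weak* topology). Then the function f_μ^p : E* → ℝ, f_μ^p(x*) = (∫_{B_{E**}} |⟨x**, x*⟩|^p dμ(x**))^{1/p}, is well defined, nonnegative, and positively homogeneous, and it belongs to H_p[E] with ‖f_μ^p‖_p ≤ 1. -/
open scoped ENNReal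

open MeasureTheory

/-- The closed unit ball of the bidual `E**`, equipped with the relative weak* topology. -/
def bidualBall (E : Type*) [NormedAddCommGroup E] [NormedSpace ℝ E] :
    Set (WeakDual ℝ (E →L[ℝ] ℝ)) :=
  { ψ : WeakDual ℝ (E →L[ℝ] ℝ) | ‖WeakDual.toStrongDual ψ‖ ≤ 1 }

/-- We equip the bidual ball with its Borel σ-algebra. -/
noncomputable instance bidualBall.instMeasurableSpace (E : Type*) [NormedAddCommGroup E]
    [NormedSpace ℝ E] : MeasurableSpace (bidualBall E) := borel _

instance bidualBall.instBorelSpace (E : Type*) [NormedAddCommGroup E]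
    [NormedSpace ℝ E] : BorelSpace (bidualBall E) := ⟨rfl⟩

/-- The function `f_μ^p(x*) = (∫_{B_{E**}} |⟨x**, x*⟩|^p dμ(x**))^{1/p}` associated with a
measure `μ` on the bidual ball. -/
noncomputable def muFun {E : Type*} [NormedAddCommGroup E] [NormedSpace ℝ E]
    (p : ℝ) (μ : Measure (bidualBall E)) (φ : E →L[ℝ] ℝ) : ℝ :=
  (∫ ψ : bidualBall E, |(ψ : WeakDual ℝ (E →L[ℝ] ℝ)) φ| ^ p ∂μ) ^ (1 / p)

section auxLemmas
variable {E : Type*} [NormedAddCommGroup E] [NormedSpace ℝ E]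

lemma rpow_one_div_pow {p : ℝ} (hp0 : 0 < p) {S : ℝ} (hS : 0 ≤ S) :
    (S ^ (1 / p)) ^ p = S := by
  rw [← Real.rpow_mul hS, one_div_mul_cancel (ne_of_gt hp0), Real.rpow_one]

lemma sum_rpow_le_of_weak {p : ℝ} (hp : 1 ≤ p) {n : ℕ} {xs : Fin n → (E →L[ℝ] ℝ)}
    (hxs : weakSumNorm p xs ≤ 1) (x : E) :
    ∑ k, |xs k x| ^ p ≤ ‖x‖ ^ p := by
  have hp0 : 0 < p := lt_of_lt_of_le one_pos hp
  have hball : ∀ y : E, ‖y‖ ≤ 1 → ∑ k, |xs k y| ^ p ≤ 1 := by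
    intro y hy
    have hmem : y ∈ Metric.closedBall (0 : E) 1 := by
      simpa [Metric.mem_closedBall] using hy
    have hbdd : BddAbove ((fun x : E => (∑ k, |xs k x| ^ p) ^ (1 / p)) '' Metric.closedBall 0 1) := by
      refine ⟨(∑ k, ‖xs k‖ ^ p) ^ (1 / p), ?_⟩
      rintro _ ⟨z, hz, rfl⟩
      have hz1 : ‖z‖ ≤ 1 := by simpa [Metric.mem_closedBall] using hz
      refine Real.rpow_le_rpow (Finset.sum_nonneg fun k _ => Real.rpow_nonneg (abs_nonneg _) _)
        (Finset.sum_le_sum fun k _ => ?_) (by positivity)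
      refine Real.rpow_le_rpow (abs_nonneg _) ?_ hp0.le
      calc |xs k z| ≤ ‖xs k‖ * ‖z‖ := (xs k).le_opNorm z
        _ ≤ ‖xs k‖ * 1 := by gcongr
        _ = ‖xs k‖ := mul_one _
    have h1 : (∑ k, |xs k y| ^ p) ^ (1 / p) ≤ 1 :=
      le_trans (le_csSup hbdd ⟨y, hmem, rfl⟩) hxs
    have hS : (0:ℝ) ≤ ∑ k, |xs k y| ^ p :=
      Finset.sum_nonneg fun k _ => Real.rpow_nonneg (abs_nonneg _) _
    calc ∑ k, |xs k y| ^ p = ((∑ k, |xs k y| ^ p) ^ (1 / p)) ^ p :=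
          (rpow_one_div_pow hp0 hS).symm
      _ ≤ 1 ^ p := Real.rpow_le_rpow (Real.rpow_nonneg hS _) h1 hp0.le
      _ = 1 := Real.one_rpow p
  rcases eq_or_ne x 0 with rfl | hx
  · simp [Real.zero_rpow (ne_of_gt hp0), abs_of_nonneg, le_of_lt hp0]
  · have hxn : 0 < ‖x‖ := norm_pos_iff.2 hx
    have := hball (‖x‖⁻¹ • x) (by
      rw [norm_smul, norm_inv, norm_norm, inv_mul_cancel₀ (ne_of_gt hxn)])
    have hrw : ∀ k : Fin n, |xs k (‖x‖⁻¹ • x)| ^ p = (‖x‖ ^ p)⁻¹ * |xs k x| ^ p := by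
      intro k
      rw [_root_.map_smul, smul_eq_mul, abs_mul, abs_inv, abs_norm,
        Real.mul_rpow (by positivity) (abs_nonneg _), Real.inv_rpow hxn.le]
    rw [Finset.sum_congr rfl (fun k _ => hrw k), ← Finset.mul_sum] at this
    have hpow : (0:ℝ) < ‖x‖ ^ p := Real.rpow_pos_of_pos hxn _
    calc ∑ k, |xs k x| ^ p = ‖x‖ ^ p * ((‖x‖ ^ p)⁻¹ * ∑ k, |xs k x| ^ p) := by
          field_simp
      _ ≤ ‖x‖ ^ p * 1 := by gcongr
      _ = ‖x‖ ^ p := mul_one _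



lemma key_sum_le {p : ℝ} (hp : 1 ≤ p) {n : ℕ} {xs : Fin n → (E →L[ℝ] ℝ)}
    (hxs : weakSumNorm p xs ≤ 1) (ψ : WeakDual ℝ (E →L[ℝ] ℝ))
    (hψ : ‖WeakDual.toStrongDual ψ‖ ≤ 1) :
    ∑ k, |ψ (xs k)| ^ p ≤ 1 := by
  have hp0 : 0 < p := lt_of_lt_of_le one_pos hp
  set a : Fin n → ℝ := fun k => ψ (xs k) with ha
  set S : ℝ := ∑ k, |a k| ^ p with hSdef
  have hS0 : 0 ≤ S := Finset.sum_nonneg fun k _ => Real.rpow_nonneg (abs_nonneg _) _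
  rcases eq_or_lt_of_le hS0 with hS | hS
  · rw [← hS]; exact zero_le_one
  -- S > 0 case
  set b : Fin n → ℝ := fun k => Real.sign (a k) * |a k| ^ (p - 1) with hb
  have hbabs : ∀ k, |b k| ≤ |a k| ^ (p - 1) := by
    intro k
    rw [hb, abs_mul, abs_of_nonneg (Real.rpow_nonneg (abs_nonneg _) _)]
    calc |Real.sign (a k)| * |a k| ^ (p-1) ≤ 1 * |a k| ^ (p-1) := by
          gcongr
          rcases Real.sign_apply_eq (a k) with h | h | h <;> simp [h]
      _ = _ := one_mul _
  have hba : ∀ k, b k * a k = |a k| ^ p := by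
    intro k
    rcases eq_or_ne (a k) 0 with h | h
    · simp [hb, h, Real.zero_rpow (ne_of_gt hp0)]
    · have habs : (0:ℝ) < |a k| := abs_pos.2 h
      have hsg : Real.sign (a k) * a k = |a k| := by
        rcases lt_trichotomy (a k) 0 with hlt | heq | hgt
        · rw [Real.sign_of_neg hlt, abs_of_neg hlt]; ring
        · exact absurd heq h
        · rw [Real.sign_of_pos hgt, abs_of_pos hgt]; ring
      rw [hb, mul_assoc, mul_comm (|a k| ^ (p-1)), ← mul_assoc, hsg,
        ← Real.rpow_one_add' habs.le (by linarith)]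
      ring_nf
  set Φ : E →L[ℝ] ℝ := ∑ k, b k • xs k with hΦ
  have hψΦ : ψ Φ = S := by
    rw [hΦ, map_sum]
    refine Finset.sum_congr rfl fun k _ => ?_
    rw [_root_.map_smul, smul_eq_mul, hba k]
  -- bound ‖Φ‖
  have hΦnorm : ‖Φ‖ ≤ S ^ (1 - 1/p) := by
    refine ContinuousLinearMap.opNorm_le_bound _ (Real.rpow_nonneg hS0 _) fun x => ?_
    rw [Real.norm_eq_abs]
    have hΦx : Φ x = ∑ k, b k * xs k x := by
      rw [hΦ]; simp [ContinuousLinearMap.sum_apply]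
    have habs : |Φ x| ≤ ∑ k, |b k| * |xs k x| := by
      rw [hΦx]
      exact (Finset.abs_sum_le_sum_abs _ _).trans
        (le_of_eq (Finset.sum_congr rfl fun k _ => abs_mul _ _))
    have hxsum : ∑ k, |xs k x| ^ p ≤ ‖x‖ ^ p := sum_rpow_le_of_weak hp hxs x
    rcases eq_or_lt_of_le hp with hp1 | hp1
    · -- p = 1
      have h1 : ∑ k, |b k| * |xs k x| ≤ ∑ k, |xs k x| := by
        refine Finset.sum_le_sum fun k _ => ?_
        calc |b k| * |xs k x| ≤ 1 * |xs k x| := by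
              gcongr
              calc |b k| ≤ |a k| ^ (p - 1) := hbabs k
                _ ≤ 1 := by rw [← hp1]; simp [Real.rpow_zero]
          _ = |xs k x| := one_mul _
      calc |Φ x| ≤ ∑ k, |xs k x| := habs.trans h1
        _ ≤ ‖x‖ := by
            have := hxsum
            rw [← hp1] at this
            simpa using this
        _ = S ^ (1 - 1/p) * ‖x‖ := by rw [← hp1]; simp
    · -- p > 1
      set q : ℝ := p / (p - 1) with hq
      have hpq : Real.HolderConjugate q p := (Real.HolderConjugate.conjExponent hp1).symm
      have hq0 : 0 < q := hpq.pos
      have hp1' : p - 1 ≠ 0 := sub_ne_zero.2 (ne_of_gt hp1)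
      have hold := Real.inner_le_Lp_mul_Lq Finset.univ (fun k => |b k|) (fun k => |(xs k) x|) hpq
      simp only [abs_abs] at hold
      have hbq : (∑ k, |b k| ^ q) ^ (1/q) ≤ S ^ (1/q) := by
        refine Real.rpow_le_rpow (Finset.sum_nonneg fun k _ => Real.rpow_nonneg (abs_nonneg _) _)
          (Finset.sum_le_sum fun k _ => ?_) (by positivity)
        calc |b k| ^ q ≤ (|a k| ^ (p-1)) ^ q :=
              Real.rpow_le_rpow (abs_nonneg _) (hbabs k) hq0.le
          _ = |a k| ^ p := by
              rw [← Real.rpow_mul (abs_nonneg _)]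
              congr 1
              rw [hq]
              field_simp
      have hxq : (∑ k, |xs k x| ^ p) ^ (1/p) ≤ ‖x‖ := by
        calc (∑ k, |xs k x| ^ p) ^ (1/p) ≤ (‖x‖ ^ p) ^ (1/p) :=
              Real.rpow_le_rpow (Finset.sum_nonneg fun k _ =>
                Real.rpow_nonneg (abs_nonneg _) _) hxsum (by positivity)
          _ = ‖x‖ := by rw [← Real.rpow_mul (norm_nonneg _),
                mul_one_div_cancel (ne_of_gt hp0), Real.rpow_one]
      have h1q : 1/q = 1 - 1/p := by
        rw [hq]
        field_simp
      calc |Φ x| ≤ (∑ k, |b k| ^ q) ^ (1/q) * (∑ k, |xs k x| ^ p) ^ (1/p) := habs.trans hold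
        _ ≤ S ^ (1/q) * ‖x‖ :=
            mul_le_mul hbq hxq (Real.rpow_nonneg (Finset.sum_nonneg fun k _ =>
              Real.rpow_nonneg (abs_nonneg _) _) _) (Real.rpow_nonneg hS0 _)
        _ = S ^ (1 - 1/p) * ‖x‖ := by rw [h1q]
  -- conclude
  have hSle : S ≤ S ^ (1 - 1/p) := by
    calc S = ψ Φ := hψΦ.symm
      _ ≤ |WeakDual.toStrongDual ψ Φ| := le_abs_self _
      _ ≤ ‖WeakDual.toStrongDual ψ‖ * ‖Φ‖ := by
          rw [← Real.norm_eq_abs]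
          exact (WeakDual.toStrongDual ψ).le_opNorm Φ
      _ ≤ 1 * (S ^ (1 - 1/p)) :=
          mul_le_mul hψ hΦnorm (norm_nonneg _) zero_le_one
      _ = S ^ (1 - 1/p) := one_mul _
  have hS1p : S ^ (1/p) ≤ 1 := by
    have hpos : (0:ℝ) < S ^ (1 - 1/p) := Real.rpow_pos_of_pos hS _
    rw [← div_le_one hpos] at hSle
    calc S ^ (1/p) = S / S ^ (1 - 1/p) := by
          rw [eq_div_iff (ne_of_gt hpos), ← Real.rpow_add hS]
          ring_nf
          rw [Real.rpow_one]
      _ ≤ 1 := hSle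
  calc S = (S ^ (1/p)) ^ p := (rpow_one_div_pow hp0 hS0).symm
    _ ≤ 1 ^ p := Real.rpow_le_rpow (Real.rpow_nonneg hS0 _) hS1p hp0.le
    _ = 1 := Real.one_rpow _

lemma abs_eval_le (ψ : bidualBall E) (φ : E →L[ℝ] ℝ) :
    |(ψ : WeakDual ℝ (E →L[ℝ] ℝ)) φ| ≤ ‖φ‖ := by
  have h2 : ‖WeakDual.toStrongDual (ψ : WeakDual ℝ (E →L[ℝ] ℝ))‖ ≤ 1 := ψ.2
  calc |(ψ : WeakDual ℝ (E →L[ℝ] ℝ)) φ|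
      = ‖WeakDual.toStrongDual (ψ : WeakDual ℝ (E →L[ℝ] ℝ)) φ‖ := (Real.norm_eq_abs _).symm
    _ ≤ ‖WeakDual.toStrongDual (ψ : WeakDual ℝ (E →L[ℝ] ℝ))‖ * ‖φ‖ :=
        ContinuousLinearMap.le_opNorm _ _
    _ ≤ 1 * ‖φ‖ := by gcongr
    _ = ‖φ‖ := one_mul _

lemma integrable_abs_eval_rpow {p : ℝ} (hp : 0 < p)
    (μ : Measure (bidualBall E)) [IsProbabilityMeasure μ] (φ : E →L[ℝ] ℝ) :
    Integrable (fun ψ : bidualBall E => |(ψ : WeakDual ℝ (E →L[ℝ] ℝ)) φ| ^ p) μ := by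
  have hc : Continuous fun ψ : bidualBall E => (ψ : WeakDual ℝ (E →L[ℝ] ℝ)) φ :=
    (WeakDual.eval_continuous φ).comp continuous_subtype_val
  have hcont : Continuous fun ψ : bidualBall E => |(ψ : WeakDual ℝ (E →L[ℝ] ℝ)) φ| ^ p :=
    hc.abs.rpow_const fun ψ => Or.inr hp.le
  refine Integrable.mono' (integrable_const (‖φ‖ ^ p)) hcont.aestronglyMeasurable
    (ae_of_all _ fun ψ => ?_)
  rw [Real.norm_eq_abs, abs_of_nonneg (Real.rpow_nonneg (abs_nonneg _) _)]
  exact Real.rpow_le_rpow (abs_nonneg _) (abs_eval_le ψ φ) hp.le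

end auxLemmas

/-- For a regular Borel probability measure `μ` on `B_{E**}` (weak*
topology), the function `f_μ^p` is nonnegative, positively homogeneous, and belongs to
`H_p[E]` with `‖f_μ^p‖_p ≤ 1`. -/
theorem muFun_mem_Hp
    (E : Type*) [NormedAddCommGroup E] [NormedSpace ℝ E] [CompleteSpace E]
    (p : ℝ) (hp : 1 ≤ p)
    (μ : Measure (bidualBall E)) [IsProbabilityMeasure μ] [μ.Regular] :
    (∀ φ : E →L[ℝ] ℝ, 0 ≤ muFun p μ φ) ∧
    PosHomog (muFun p μ) ∧
    pqNorm p p (muFun p μ) ≤ 1 := by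
  have hp0 : 0 < p := lt_of_lt_of_le one_pos hp
  have hnn : ∀ φ : E →L[ℝ] ℝ, 0 ≤ muFun p μ φ := fun φ =>
    Real.rpow_nonneg (integral_nonneg fun ψ => Real.rpow_nonneg (abs_nonneg _) _) _
  refine ⟨hnn, ?_, ?_⟩
  · -- positive homogeneity
    intro c hc φ
    unfold muFun
    have heq : ∀ ψ : bidualBall E,
        |(ψ : WeakDual ℝ (E →L[ℝ] ℝ)) (c • φ)| ^ p
          = c ^ p * |(ψ : WeakDual ℝ (E →L[ℝ] ℝ)) φ| ^ p := by
      intro ψ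
      rw [_root_.map_smul, smul_eq_mul, abs_mul, abs_of_nonneg hc,
        Real.mul_rpow hc (abs_nonneg _)]
    simp_rw [heq]
    rw [integral_const_mul, Real.mul_rpow (Real.rpow_nonneg hc _)
      (integral_nonneg fun ψ => Real.rpow_nonneg (abs_nonneg _) _),
      ← Real.rpow_mul hc, mul_one_div_cancel (ne_of_gt hp0), Real.rpow_one]
  · -- the norm bound
    unfold pqNorm
    refine iSup_le fun n => iSup_le fun xs => iSup_le fun hxs => ?_
    have hint : ∀ k : Fin n,
        Integrable (fun ψ : bidualBall E => |(ψ : WeakDual ℝ (E →L[ℝ] ℝ)) (xs k)| ^ p) μ :=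
      fun k => integrable_abs_eval_rpow hp0 μ (xs k)
    have hfk : ∀ k : Fin n, |muFun p μ (xs k)| ^ p
        = ∫ ψ : bidualBall E, |(ψ : WeakDual ℝ (E →L[ℝ] ℝ)) (xs k)| ^ p ∂μ := by
      intro k
      rw [abs_of_nonneg (hnn (xs k))]
      exact rpow_one_div_pow hp0 (integral_nonneg fun ψ => Real.rpow_nonneg (abs_nonneg _) _)
    have hsum : ∑ k, |muFun p μ (xs k)| ^ p
        = ∫ ψ : bidualBall E, ∑ k, |(ψ : WeakDual ℝ (E →L[ℝ] ℝ)) (xs k)| ^ p ∂μ := by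
      rw [Finset.sum_congr rfl fun k _ => hfk k]
      exact (integral_finset_sum _ fun k _ => hint k).symm
    have hle1 : ∑ k, |muFun p μ (xs k)| ^ p ≤ 1 := by
      rw [hsum]
      calc ∫ ψ : bidualBall E, ∑ k, |(ψ : WeakDual ℝ (E →L[ℝ] ℝ)) (xs k)| ^ p ∂μ
          ≤ ∫ _ : bidualBall E, (1:ℝ) ∂μ := by
            refine integral_mono (integrable_finset_sum _ fun k _ => hint k)
              (integrable_const 1) fun ψ => ?_
            exact key_sum_le hp hxs (ψ : WeakDual ℝ (E →L[ℝ] ℝ)) ψ.2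
        _ = 1 := by simp
    refine ENNReal.ofReal_le_one.2 ?_
    exact Real.rpow_le_one (Finset.sum_nonneg fun k _ => Real.rpow_nonneg (abs_nonneg _) _)
      hle1 (by positivity)
end

section
/- Let E be a real Banach space, 1 ≤ p < ∞, and let f ∈ H_p[E] with f(x*) ≥ 0 for all x* ∈ E*. Then there exists a regular Borel probability measure μ on B_{E**} (with the weak* topology) such that f(x*) ≤ ‖f‖_p · f_μ^p(x*) for every x* ∈ E*, where f_μ^p(x*) = (∫_{B_{E**}} |⟨x**, x*⟩|^p dμ(x**))^{1/p}. -/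
open scoped ENNReal

open MeasureTheory

open MeasureTheory Set
open scoped NNReal ENNReal
set_option linter.unusedSectionVars false

section RMKLite

variable {X : Type*} [TopologicalSpace X] [CompactSpace X] [T2Space X]

/-- Test functions dominating the indicator of `K`. -/
def testSet (K : Set X) : Set C(X, ℝ) :=
  {g | (∀ x, 0 ≤ g x) ∧ ∀ x ∈ K, 1 ≤ g x}

lemma one_mem_testSet (K : Set X) : (1 : C(X, ℝ)) ∈ testSet K :=
  ⟨fun _ => zero_le_one, fun _ _ => le_rfl⟩

variable (T : C(X, ℝ) →ₗ[ℝ] ℝ)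

lemma T_mono (hpos : ∀ g : C(X, ℝ), (∀ x, 0 ≤ g x) → 0 ≤ T g)
    {g h : C(X, ℝ)} (hle : ∀ x, g x ≤ h x) : T g ≤ T h := by
  have h1 : 0 ≤ T (h - g) := hpos _ (fun x => by
    simp only [ContinuousMap.sub_apply]; linarith [hle x])
  have h2 := map_sub T h g
  linarith [h2 ▸ h1]

/-- The Riesz content of a set. -/
noncomputable def rc (K : Set X) : ℝ := sInf (T '' testSet K)

variable (hpos : ∀ g : C(X, ℝ), (∀ x, 0 ≤ g x) → 0 ≤ T g)

include hpos

lemma rc_nonneg (K : Set X) : 0 ≤ rc T K :=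
  Real.sInf_nonneg (by rintro x ⟨g, hg, rfl⟩; exact hpos g hg.1)

lemma rc_bddBelow (K : Set X) : BddBelow (T '' testSet K) :=
  ⟨0, by rintro x ⟨g, hg, rfl⟩; exact hpos g hg.1⟩

lemma rc_le {K : Set X} {g : C(X, ℝ)} (hg : g ∈ testSet K) : rc T K ≤ T g :=
  csInf_le (rc_bddBelow T hpos K) ⟨g, hg, rfl⟩

omit hpos in
lemma le_rc {K : Set X} {c : ℝ} (h : ∀ g ∈ testSet K, c ≤ T g) : c ≤ rc T K :=
  le_csInf (⟨T 1, 1, one_mem_testSet K, rfl⟩) (by rintro x ⟨g, hg, rfl⟩; exact h g hg)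

lemma rc_mono {K₁ K₂ : Set X} (h : K₁ ⊆ K₂) : rc T K₁ ≤ rc T K₂ :=
  csInf_le_csInf (rc_bddBelow T hpos K₁) ⟨T 1, 1, one_mem_testSet K₂, rfl⟩
    (Set.image_mono (fun g hg => ⟨hg.1, fun x hx => hg.2 x (h hx)⟩))

omit hpos in
lemma exists_test_lt {K : Set X} {ε : ℝ} (hε : 0 < ε) :
    ∃ g ∈ testSet K, T g < rc T K + ε := by
  have hne : (T '' testSet K).Nonempty := ⟨T 1, 1, one_mem_testSet K, rfl⟩
  obtain ⟨y, ⟨g, hg, rfl⟩, hy⟩ := exists_lt_of_csInf_lt hne (lt_add_of_pos_right (rc T K) hε)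
  exact ⟨g, hg, hy⟩

lemma rc_subadd (K₁ K₂ : Set X) : rc T (K₁ ∪ K₂) ≤ rc T K₁ + rc T K₂ := by
  refine le_of_forall_pos_le_add (fun ε hε => ?_)
  obtain ⟨g₁, hg₁, h1⟩ := exists_test_lt T (K := K₁) (half_pos hε)
  obtain ⟨g₂, hg₂, h2⟩ := exists_test_lt T (K := K₂) (half_pos hε)
  have hmem : g₁ + g₂ ∈ testSet (K₁ ∪ K₂) := by
    refine ⟨fun x => by simpa using add_nonneg (hg₁.1 x) (hg₂.1 x), ?_⟩
    rintro x (hx | hx)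
    · simpa using le_add_of_le_of_nonneg (hg₁.2 x hx) (hg₂.1 x)
    · simpa using le_add_of_nonneg_of_le (hg₁.1 x) (hg₂.2 x hx)
  calc rc T (K₁ ∪ K₂) ≤ T (g₁ + g₂) := rc_le T hpos hmem
    _ = T g₁ + T g₂ := map_add T g₁ g₂
    _ ≤ rc T K₁ + rc T K₂ + ε := by linarith

lemma rc_disjoint_add {K₁ K₂ : Set X} (hd : Disjoint K₁ K₂)
    (h₁ : IsClosed K₁) (h₂ : IsClosed K₂) :
    rc T (K₁ ∪ K₂) = rc T K₁ + rc T K₂ := by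
  refine le_antisymm (rc_subadd T hpos K₁ K₂) (le_rc T ?_)
  intro g hg
  obtain ⟨u, hu0, hu1, hu01⟩ := exists_continuous_zero_one_of_isClosed h₁ h₂ hd
  have hmem₁ : g * (1 - u) ∈ testSet K₁ := by
    constructor
    · intro x
      simp only [ContinuousMap.mul_apply, ContinuousMap.sub_apply, ContinuousMap.one_apply]
      exact mul_nonneg (hg.1 x) (by linarith [(hu01 x).2])
    · intro x hx
      have := hu0 hx
      simp only [ContinuousMap.mul_apply, ContinuousMap.sub_apply, ContinuousMap.one_apply,
        show u x = 0 from this, sub_zero, mul_one]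
      exact hg.2 x (Or.inl hx)
  have hmem₂ : g * u ∈ testSet K₂ := by
    constructor
    · intro x
      simp only [ContinuousMap.mul_apply]
      exact mul_nonneg (hg.1 x) (hu01 x).1
    · intro x hx
      have := hu1 hx
      simp only [ContinuousMap.mul_apply, show u x = 1 from this, mul_one]
      exact hg.2 x (Or.inr hx)
  have hsum : g * (1 - u) + g * u = g := by ring
  calc rc T K₁ + rc T K₂ ≤ T (g * (1 - u)) + T (g * u) :=
        add_le_add (rc_le T hpos hmem₁) (rc_le T hpos hmem₂)
    _ = T (g * (1 - u) + g * u) := (map_add T _ _).symm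
    _ = T g := by rw [hsum]

/-- The Riesz content as a `Content`. -/
noncomputable def rieszCont : Content X where
  toFun K := Real.toNNReal (rc T K)
  mono' K₁ K₂ h := Real.toNNReal_mono (rc_mono T hpos h)
  sup_disjoint' K₁ K₂ hd h₁ h₂ := by
    have : rc T ((K₁ ⊔ K₂ : TopologicalSpace.Compacts X) : Set X) = rc T K₁ + rc T K₂ := by
      rw [TopologicalSpace.Compacts.coe_sup]
      exact rc_disjoint_add T hpos hd h₁ h₂
    rw [this, Real.toNNReal_add (rc_nonneg T hpos _) (rc_nonneg T hpos _)]
  sup_le' K₁ K₂ := by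
    rw [← Real.toNNReal_add (rc_nonneg T hpos _) (rc_nonneg T hpos _)]
    refine Real.toNNReal_mono ?_
    rw [TopologicalSpace.Compacts.coe_sup]
    exact rc_subadd T hpos K₁ K₂

end RMKLite

lemma sum_min_max : ∀ (N : ℕ) (t : ℝ), 0 ≤ t → t ≤ N →
    ∑ i ∈ Finset.range N, min 1 (max 0 (t - i)) = t := by
  intro N
  induction N with
  | zero => intro t h0 hN; simp only [Nat.cast_zero] at hN
            simp [le_antisymm hN h0]
  | succ N ih =>
    intro t h0 hN
    rw [Finset.sum_range_succ]
    by_cases h : t ≤ N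
    · rw [ih t h0 h]
      have h1 : t - N ≤ 0 := by linarith
      simp [max_eq_left h1]
    · push_neg at h
      have hterm : ∀ i ∈ Finset.range N, min 1 (max 0 (t - (i:ℝ))) = 1 := by
        intro i hi
        rw [Finset.mem_range] at hi
        have hi' : (i:ℝ) + 1 ≤ N := by exact_mod_cast Nat.succ_le_of_lt hi
        have h1 : 1 ≤ t - i := by linarith
        rw [max_eq_right (by linarith : (0:ℝ) ≤ t - i), min_eq_left h1]
      rw [Finset.sum_congr rfl hterm, Finset.sum_const, Finset.card_range]
      have hN' : t ≤ (N:ℝ) + 1 := by push_cast at hN; linarith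
      have h2 : max 0 (t - N) = t - N := max_eq_right (by linarith)
      have h3 : min 1 (t - N) = t - N := min_eq_right (by linarith)
      rw [h2, h3]
      push_cast
      ring

theorem rmk_lite {X : Type*} [TopologicalSpace X] [CompactSpace X] [T2Space X]
    [MeasurableSpace X] [BorelSpace X]
    (T : C(X, ℝ) →ₗ[ℝ] ℝ) (hpos : ∀ g : C(X, ℝ), (∀ x, 0 ≤ g x) → 0 ≤ T g)
    (hT1 : T 1 = 1) :
    ∃ μ : Measure X, IsProbabilityMeasure μ ∧ μ.Regular ∧
      ∀ g : C(X, ℝ), (∀ x, 0 ≤ g x) → T g ≤ ∫ x, g x ∂μ := by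
  haveI : WeaklyLocallyCompactSpace X :=
    ⟨fun _ => ⟨Set.univ, isCompact_univ, Filter.univ_mem⟩⟩
  set Co := rieszCont T hpos with hCo
  set μ := Co.measure with hμ
  have huniv : μ Set.univ = 1 := by
    have e1 : μ Set.univ = Co.outerMeasure Set.univ := Content.measure_apply _ MeasurableSet.univ
    have e2 : Co.outerMeasure Set.univ = Co.innerContent ⟨Set.univ, isOpen_univ⟩ :=
      Content.outerMeasure_of_isOpen _ _ isOpen_univ
    have e3 : Co.innerContent ⟨Set.univ, isOpen_univ⟩ =
        Co (⟨Set.univ, isCompact_univ⟩ : TopologicalSpace.Compacts X) :=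
      Content.innerContent_of_isCompact _ isCompact_univ isOpen_univ
    have e4 : rc T (Set.univ : Set X) = 1 := by
      refine le_antisymm ?_ (le_rc T ?_)
      · have := rc_le T hpos (one_mem_testSet (Set.univ : Set X))
        rwa [hT1] at this
      · intro g hg
        have := T_mono T hpos (g := 1) (h := g) (fun x => hg.2 x trivial)
        rwa [hT1] at this
    have e5 : Co (⟨Set.univ, isCompact_univ⟩ : TopologicalSpace.Compacts X) = 1 := by
      show ((Real.toNNReal (rc T (Set.univ : Set X)) : ℝ≥0) : ℝ≥0∞) = 1
      rw [e4]; simp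
    rw [e1, e2, e3]; exact e5
  haveI hprob : IsProbabilityMeasure μ := ⟨huniv⟩
  refine ⟨μ, hprob, inferInstance, ?_⟩
  intro g hg
  have hint : Integrable g μ := by
    rw [← integrableOn_univ]
    exact ContinuousOn.integrableOn_compact' isCompact_univ MeasurableSet.univ
      g.continuous.continuousOn
  have hintnn : 0 ≤ ∫ x, g x ∂μ := integral_nonneg hg
  -- main estimate for each n
  have main : ∀ n : ℕ, 0 < n → T g ≤ ∫ x, g x ∂μ + 1 / n := by
    intro n hn
    set N : ℕ := ⌈(n : ℝ) * ‖g‖⌉₊ with hN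
    have hNg : ∀ x, (n : ℝ) * g x ≤ N := by
      intro x
      have h1 : g x ≤ ‖g‖ := (le_abs_self _).trans
        (by rw [← Real.norm_eq_abs]; exact g.norm_coe_le_norm x)
      calc (n : ℝ) * g x ≤ (n : ℝ) * ‖g‖ := by
            have : (0:ℝ) ≤ n := Nat.cast_nonneg n
            nlinarith
        _ ≤ N := Nat.le_ceil _
    set G : ℕ → C(X, ℝ) := fun i =>
      ⟨fun x => min 1 (max 0 ((n : ℝ) * g x - i)),
        (continuous_const.min ((continuous_const.max
          (((continuous_const.mul (map_continuous g)).sub continuous_const)))))⟩ with hG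
    have hGapp : ∀ i x, G i x = min 1 (max 0 ((n : ℝ) * g x - i)) := fun _ _ => rfl
    -- (A)
    have hA : ∑ i ∈ Finset.range N, T (G i) = (n : ℝ) * T g := by
      rw [← map_sum]
      have : ∑ i ∈ Finset.range N, G i = (n : ℝ) • g := by
        ext x
        rw [ContinuousMap.coe_sum, Finset.sum_apply]
        simp only [hGapp, ContinuousMap.smul_apply, smul_eq_mul]
        exact sum_min_max N ((n : ℝ) * g x)
          (mul_nonneg (Nat.cast_nonneg n) (hg x)) (hNg x)
      rw [this, _root_.map_smul, smul_eq_mul]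
    -- the level sets
    set s : ℕ → Set X := fun i => {x | (i : ℝ) ≤ (n : ℝ) * g x} with hs
    have hsclosed : ∀ i, IsClosed (s i) := fun i =>
      isClosed_le continuous_const (continuous_const.mul (map_continuous g))
    -- (B)
    have hB : ∀ i, T (G i) ≤ (μ (s i)).toReal := by
      intro i
      set S := closure {x | G i x ≠ 0} with hS
      have hSc : IsCompact S := isClosed_closure.isCompact
      have h1 : T (G i) ≤ rc T S := by
        refine le_rc T (fun h hh => T_mono T hpos (fun x => ?_))
        by_cases hx : G i x = 0
        · rw [hx]; exact hh.1 x
        · have hxS : x ∈ S := subset_closure hx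
          exact le_trans (by rw [hGapp]; exact min_le_left _ _) (hh.2 x hxS)
      have h2 : S ⊆ s i := by
        refine closure_minimal (fun x hx => ?_) (hsclosed i)
        by_contra hcon
        apply hx
        rw [hGapp]
        have : (n : ℝ) * g x - i ≤ 0 := by
          simp only [hs, Set.mem_setOf_eq, not_le] at hcon
          linarith
        rw [max_eq_left this]
        simp
      have h3 : ((Real.toNNReal (rc T S) : ℝ≥0) : ℝ≥0∞) ≤ μ (s i) := by
        calc ((Real.toNNReal (rc T S) : ℝ≥0) : ℝ≥0∞) = Co ⟨S, hSc⟩ := rfl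
          _ ≤ Co.outerMeasure S := Content.le_outerMeasure_compacts _ _
          _ = μ S := (Content.measure_apply _ isClosed_closure.measurableSet).symm
          _ ≤ μ (s i) := measure_mono h2
      calc T (G i) ≤ rc T S := h1
        _ = ((Real.toNNReal (rc T S) : ℝ≥0) : ℝ≥0∞).toReal := by
            simp [Real.coe_toNNReal _ (rc_nonneg T hpos S)]
        _ ≤ (μ (s i)).toReal := ENNReal.toReal_mono (measure_ne_top μ _) h3
    -- (C)
    have hC : ∑ i ∈ Finset.range N, μ (s i) ≤
        ENNReal.ofReal ((n : ℝ) * ∫ x, g x ∂μ) + 1 := by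
      have hms : ∀ i, MeasurableSet (s i) := fun i => (hsclosed i).measurableSet
      have e1 : ∀ i, μ (s i) = ∫⁻ x, (s i).indicator (fun _ => (1 : ℝ≥0∞)) x ∂μ := by
        intro i
        rw [← lintegral_indicator_one (hms i)]; rfl
      rw [Finset.sum_congr rfl (fun i _ => e1 i), ← lintegral_finset_sum _
        (fun i _ => (measurable_const.indicator (hms i)))]
      have hpt : ∀ x, ∑ i ∈ Finset.range N, (s i).indicator (fun _ => (1 : ℝ≥0∞)) x
          ≤ ENNReal.ofReal ((n : ℝ) * g x) + 1 := by
        intro x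
        set m := ⌊(n : ℝ) * g x⌋₊ with hm
        have step1 : ∑ i ∈ Finset.range N, (s i).indicator (fun _ => (1 : ℝ≥0∞)) x
            ≤ ∑ i ∈ Finset.range N, (if i ≤ m then (1 : ℝ≥0∞) else 0) := by
          refine Finset.sum_le_sum (fun i _ => ?_)
          by_cases hx : x ∈ s i
          · rw [Set.indicator_of_mem hx]
            have : i ≤ m := Nat.le_floor hx
            simp [this]
          · rw [Set.indicator_of_notMem hx]
            exact zero_le
        have step2 : ∑ i ∈ Finset.range N, (if i ≤ m then (1 : ℝ≥0∞) else 0)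
            ≤ (m + 1 : ℕ) := by
          rw [Finset.sum_ite, Finset.sum_const_zero, add_zero, Finset.sum_const]
          simp only [nsmul_eq_mul, mul_one]
          have hsub : (Finset.range N).filter (· ≤ m) ⊆ Finset.range (m + 1) := by
            intro i hi
            simp only [Finset.mem_filter] at hi
            exact Finset.mem_range.mpr (Nat.lt_succ_of_le hi.2)
          have := Finset.card_le_card hsub
          rw [Finset.card_range] at this
          exact_mod_cast Nat.cast_le.mpr this
        have step3 : ((m + 1 : ℕ) : ℝ≥0∞) ≤ ENNReal.ofReal ((n : ℝ) * g x) + 1 := by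
          push_cast
          have : ((m : ℕ) : ℝ≥0∞) = ENNReal.ofReal (m : ℝ) := by
            rw [ENNReal.ofReal_natCast]
          rw [this]
          exact add_le_add (ENNReal.ofReal_le_ofReal
            (Nat.floor_le (mul_nonneg (Nat.cast_nonneg n) (hg x)))) le_rfl
        exact le_trans step1 (le_trans step2 step3)
      calc ∫⁻ x, ∑ i ∈ Finset.range N, (s i).indicator (fun _ => (1 : ℝ≥0∞)) x ∂μ
          ≤ ∫⁻ x, (ENNReal.ofReal ((n : ℝ) * g x) + 1) ∂μ := lintegral_mono hpt
        _ = ∫⁻ x, ENNReal.ofReal ((n : ℝ) * g x) ∂μ + 1 := by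
            rw [lintegral_add_right _ measurable_const, lintegral_one, huniv]
        _ = ENNReal.ofReal ((n : ℝ) * ∫ x, g x ∂μ) + 1 := by
            rw [← ofReal_integral_eq_lintegral_ofReal (hint.const_mul _)
              (Filter.Eventually.of_forall (fun x =>
                mul_nonneg (Nat.cast_nonneg n) (hg x))), integral_const_mul]
    -- (D) combine
    have hfin : ∀ i ∈ Finset.range N, μ (s i) ≠ ⊤ := fun i _ => measure_ne_top μ _
    have hD : (n : ℝ) * T g ≤ (n : ℝ) * ∫ x, g x ∂μ + 1 := by
      calc (n : ℝ) * T g = ∑ i ∈ Finset.range N, T (G i) := hA.symm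
        _ ≤ ∑ i ∈ Finset.range N, (μ (s i)).toReal := Finset.sum_le_sum (fun i _ => hB i)
        _ = (∑ i ∈ Finset.range N, μ (s i)).toReal := (ENNReal.toReal_sum hfin).symm
        _ ≤ (ENNReal.ofReal ((n : ℝ) * ∫ x, g x ∂μ) + 1).toReal := by
            refine ENNReal.toReal_mono ?_ hC
            exact ENNReal.add_ne_top.mpr ⟨ENNReal.ofReal_ne_top, ENNReal.one_ne_top⟩
        _ = (n : ℝ) * ∫ x, g x ∂μ + 1 := by
            rw [ENNReal.toReal_add ENNReal.ofReal_ne_top ENNReal.one_ne_top,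
              ENNReal.toReal_ofReal (mul_nonneg (Nat.cast_nonneg n) hintnn),
              ENNReal.toReal_one]
    have hn' : (0:ℝ) < (n:ℝ) := Nat.cast_pos.mpr hn
    have h2 : T g ≤ ((n : ℝ) * ∫ x, g x ∂μ + 1) / n := by
      rw [le_div_iff₀ hn']; linarith
    calc T g ≤ ((n : ℝ) * ∫ x, g x ∂μ + 1) / n := h2
      _ = ∫ x, g x ∂μ + 1 / n := by field_simp
  refine le_of_forall_pos_le_add (fun ε hε => ?_)
  obtain ⟨n, hn⟩ := exists_nat_one_div_lt hε
  calc T g ≤ ∫ x, g x ∂μ + 1 / (n + 1 : ℕ) := main (n + 1) (Nat.succ_pos n)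
    _ ≤ ∫ x, g x ∂μ + ε := by
        push_cast
        linarith [hn]

set_option maxHeartbeats 1600000

/-- nonlinear Pietsch domination. If `f ∈ H_p[E]` is nonnegative, then
there is a regular Borel probability measure `μ` on `B_{E**}` (weak* topology) such that
`f(x*) ≤ ‖f‖_p · f_μ^p(x*)` for every `x* ∈ E*`. -/

theorem pietsch_domination_for_Hp
    (E : Type*) [NormedAddCommGroup E] [NormedSpace ℝ E] [CompleteSpace E]
    (p : ℝ) (hp : 1 ≤ p)
    (f : (E →L[ℝ] ℝ) → ℝ) (hf : PosHomog f) (hpos : ∀ φ : E →L[ℝ] ℝ, 0 ≤ f φ)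
    (hfin : pqNorm p p f < ⊤) :
    ∃ μ : Measure (bidualBall E), IsProbabilityMeasure μ ∧ μ.Regular ∧
      ∀ φ : E →L[ℝ] ℝ, f φ ≤ (pqNorm p p f).toReal * muFun p μ φ := by
  haveI hcs : CompactSpace (bidualBall E) := isCompact_iff_compactSpace.mp (by
    have h : bidualBall E = WeakDual.toStrongDual ⁻¹' Metric.closedBall 0 1 := by
      ext ψ; simp [bidualBall, mem_closedBall_zero_iff, dist_zero_right]
      exact iff_of_eq (congrArg (· ≤ (1:ℝ)) (dist_zero_right (E := StrongDual ℝ (E →L[ℝ] ℝ)) _).symm)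
    rw [h]; exact WeakDual.isCompact_closedBall 0 1)
  have hzeromem : (0 : WeakDual ℝ (E →L[ℝ] ℝ)) ∈ bidualBall E := by
    simp [bidualBall]
    exact (norm_zero (E := StrongDual ℝ (E →L[ℝ] ℝ))).le.trans zero_le_one
  haveI : Nonempty (bidualBall E) := ⟨⟨0, hzeromem⟩⟩
  set C := (pqNorm p p f).toReal with hCdef
  have hC0 : 0 ≤ C := ENNReal.toReal_nonneg
  have hp0 : (0:ℝ) < p := lt_of_lt_of_le one_pos hp
  have hpne : p ≠ 0 := ne_of_gt hp0
  have hf0 : f 0 = 0 := by have := hf 0 le_rfl 0; simpa using this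
  -- Step 1: the norm estimate from pqNorm
  have key1 : ∀ (n : ℕ) (xs : Fin n → E →L[ℝ] ℝ), weakSumNorm p xs ≤ 1 →
      (∑ k, |f (xs k)| ^ p) ^ (1/p) ≤ C := by
    intro n xs hxs
    have hv : 0 ≤ (∑ k, |f (xs k)| ^ p) ^ (1/p) :=
      Real.rpow_nonneg (Finset.sum_nonneg fun k _ => Real.rpow_nonneg (abs_nonneg _) _) _
    have hle : ENNReal.ofReal ((∑ k, |f (xs k)| ^ p) ^ (1/p)) ≤ pqNorm p p f := by
      refine le_iSup_of_le n ?_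
      refine le_iSup_of_le xs ?_
      exact le_iSup_of_le hxs le_rfl
    have h2 := ENNReal.toReal_mono hfin.ne hle
    rwa [ENNReal.toReal_ofReal hv] at h2
  -- Step 2: attained sup domination
  have key2 : ∀ (n : ℕ) (xs : Fin n → E →L[ℝ] ℝ), ∃ ψ ∈ bidualBall E,
      ∑ k, f (xs k) ^ p ≤ C ^ p * ∑ k, |ψ (xs k)| ^ p := by
    intro n xs
    have hcont : Continuous (fun ψ : WeakDual ℝ (E →L[ℝ] ℝ) => ∑ k, |ψ (xs k)| ^ p) :=
      continuous_finset_sum _ fun k _ =>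
        ((WeakDual.eval_continuous (xs k)).abs.rpow_const fun _ => Or.inr hp0.le)
    obtain ⟨ψ0, hψ0, hmax⟩ := (isCompact_iff_compactSpace.mpr hcs :
        IsCompact (bidualBall E)).exists_isMaxOn ⟨0, hzeromem⟩ hcont.continuousOn
    refine ⟨ψ0, hψ0, ?_⟩
    set S := ∑ k, |ψ0 (xs k)| ^ p with hS
    have hS0 : 0 ≤ S := Finset.sum_nonneg fun k _ => Real.rpow_nonneg (abs_nonneg _) _
    have hball : ∀ x : E, ‖x‖ ≤ 1 → ∑ k, |xs k x| ^ p ≤ S := by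
      intro x hx
      have hmem : (NormedSpace.inclusionInDoubleDual ℝ E x : WeakDual ℝ (E →L[ℝ] ℝ))
          ∈ bidualBall E := by
          show ‖WeakDual.toStrongDual _‖ ≤ 1
          exact (NormedSpace.double_dual_bound ℝ E x).trans hx
      have h2 := (isMaxOn_iff.mp hmax) _ hmem
      exact h2
    rcases eq_or_lt_of_le hS0 with hSzero | hSpos
    · -- all xs k vanish
      have hxk : ∀ k, xs k = 0 := by
        intro k
        ext y
        rcases eq_or_ne y 0 with rfl | hy
        · simp
        · have h1 : ‖(‖y‖⁻¹) • y‖ ≤ 1 := by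
            rw [norm_smul, norm_inv, norm_norm, inv_mul_cancel₀ (norm_ne_zero_iff.mpr hy)]
          have h2 := hball _ h1
          rw [← hSzero] at h2
          have h3 : |xs k ((‖y‖⁻¹) • y)| ^ p = 0 := by
            have := (Finset.sum_eq_zero_iff_of_nonneg
              (fun j _ => Real.rpow_nonneg (abs_nonneg (xs j ((‖y‖⁻¹) • y))) p)).mp
              (le_antisymm h2 (Finset.sum_nonneg fun j _ => Real.rpow_nonneg (abs_nonneg _) _))
            exact this k (Finset.mem_univ k)
          have h4 : xs k ((‖y‖⁻¹) • y) = 0 := by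
            have := (Real.rpow_eq_zero (abs_nonneg _) hpne).mp h3
            exact abs_eq_zero.mp this
          rw [ContinuousLinearMap.map_smul, smul_eq_mul] at h4
          have h5 : ‖y‖⁻¹ ≠ 0 := inv_ne_zero (norm_ne_zero_iff.mpr hy)
          simpa [h5] using h4
      have hzero : ∑ k, f (xs k) ^ p = 0 := by
        refine Finset.sum_eq_zero fun k _ => ?_
        rw [hxk k, hf0, Real.zero_rpow hpne]
      rw [hzero, ← hSzero, mul_zero]
    · -- normalize
      set c := (S ^ (1/p))⁻¹ with hc
      have hSp : 0 < S ^ (1/p) := Real.rpow_pos_of_pos hSpos _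
      have hc0 : 0 ≤ c := inv_nonneg.mpr hSp.le
      have hcp : c ^ p = S⁻¹ := by
        rw [hc, Real.inv_rpow hSp.le, ← Real.rpow_mul hS0, one_div_mul_cancel hpne,
          Real.rpow_one]
      set ys : Fin n → E →L[ℝ] ℝ := fun k => c • xs k with hys
      have hsum_ys : ∀ x : E, ‖x‖ ≤ 1 → ∑ k, |ys k x| ^ p ≤ 1 := by
        intro x hx
        have hterm : ∀ k : Fin n, |ys k x| ^ p = S⁻¹ * |xs k x| ^ p := by
          intro k
          show |(c • xs k) x| ^ p = _
          rw [ContinuousLinearMap.smul_apply, smul_eq_mul, abs_mul, abs_of_nonneg hc0,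
            Real.mul_rpow hc0 (abs_nonneg _), hcp]
        rw [Finset.sum_congr rfl (fun k _ => hterm k), ← Finset.mul_sum]
        calc S⁻¹ * ∑ k, |xs k x| ^ p ≤ S⁻¹ * S :=
              mul_le_mul_of_nonneg_left (hball x hx) (inv_nonneg.mpr hS0)
          _ = 1 := inv_mul_cancel₀ (ne_of_gt hSpos)
      have hwsn : weakSumNorm p ys ≤ 1 := by
        refine Real.sSup_le ?_ zero_le_one
        rintro v ⟨x, hx, rfl⟩
        rw [Metric.mem_closedBall, dist_zero_right] at hx
        exact Real.rpow_le_one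
          (Finset.sum_nonneg fun k _ => Real.rpow_nonneg (abs_nonneg _) _)
          (hsum_ys x hx) (by positivity)
      have h1 := key1 n ys hwsn
      have hfys : ∀ k : Fin n, |f (ys k)| ^ p = S⁻¹ * f (xs k) ^ p := by
        intro k
        rw [show ys k = c • xs k from rfl, hf c hc0 (xs k),
          abs_of_nonneg (mul_nonneg hc0 (hpos _)), Real.mul_rpow hc0 (hpos _), hcp]
      rw [Finset.sum_congr rfl (fun k _ => hfys k), ← Finset.mul_sum] at h1
      have hbase : 0 ≤ S⁻¹ * ∑ k, f (xs k) ^ p :=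
        mul_nonneg (inv_nonneg.mpr hS0)
          (Finset.sum_nonneg fun k _ => Real.rpow_nonneg (hpos _) _)
      have h2 : S⁻¹ * ∑ k, f (xs k) ^ p ≤ C ^ p := by
        have h3 := Real.rpow_le_rpow (Real.rpow_nonneg hbase _) h1 hp0.le
        rwa [← Real.rpow_mul hbase, one_div_mul_cancel hpne, Real.rpow_one] at h3
      calc ∑ k, f (xs k) ^ p = S * (S⁻¹ * ∑ k, f (xs k) ^ p) := by
            field_simp
        _ ≤ S * C ^ p := mul_le_mul_of_nonneg_left h2 hS0
        _ = C ^ p * S := mul_comm _ _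
  -- Step 3: convex separation in C(K, ℝ)
  set FF : (n : ℕ) → (Fin n → E →L[ℝ] ℝ) → C(bidualBall E, ℝ) := fun n xs =>
    ⟨fun ψ => ∑ k, (f (xs k) ^ p
        - C ^ p * |(ψ : WeakDual ℝ (E →L[ℝ] ℝ)) (xs k)| ^ p),
     continuous_finset_sum _ fun k _ => continuous_const.sub (continuous_const.mul
       (((WeakDual.eval_continuous (xs k)).comp continuous_subtype_val).abs.rpow_const
         fun _ => Or.inr hp0.le))⟩ with hFF
  have hFFapp : ∀ (n : ℕ) (xs : Fin n → E →L[ℝ] ℝ) (ψ : bidualBall E), FF n xs ψ =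
      ∑ k, (f (xs k) ^ p - C ^ p * |(ψ : WeakDual ℝ (E →L[ℝ] ℝ)) (xs k)| ^ p) :=
    fun _ _ _ => rfl
  set A : Set C(bidualBall E, ℝ) := {g | ∃ n xs, g = FF n xs} with hA
  set B : Set C(bidualBall E, ℝ) := {h | ∀ ψ, 0 < h ψ} with hB
  have hA0mem : (0 : C(bidualBall E, ℝ)) ∈ A := by
    refine ⟨0, Fin.elim0, ?_⟩
    ext ψ
    rw [hFFapp]
    simp
  have hAconv : Convex ℝ A := by
    rintro g₁ ⟨n₁, xs₁, rfl⟩ g₂ ⟨n₂, xs₂, rfl⟩ a b ha hb hab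
    refine ⟨n₁ + n₂,
      Fin.append (fun k => (a ^ (1/p)) • xs₁ k) (fun k => (b ^ (1/p)) • xs₂ k), ?_⟩
    ext ψ
    have hterm : ∀ (c : ℝ), 0 ≤ c → ∀ (x : E →L[ℝ] ℝ),
        f ((c ^ (1/p)) • x) ^ p
          - C ^ p * |(ψ : WeakDual ℝ (E →L[ℝ] ℝ)) ((c ^ (1/p)) • x)| ^ p
        = c * (f x ^ p - C ^ p * |(ψ : WeakDual ℝ (E →L[ℝ] ℝ)) x| ^ p) := by
      intro c hc x
      have hc1 : 0 ≤ c ^ (1/p) := Real.rpow_nonneg hc _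
      have hcp' : (c ^ (1/p)) ^ p = c := by
        rw [← Real.rpow_mul hc, one_div_mul_cancel hpne, Real.rpow_one]
      have e1 : f ((c ^ (1/p)) • x) ^ p = c * f x ^ p := by
        rw [hf _ hc1, Real.mul_rpow hc1 (hpos _), hcp']
      have e2 : |(ψ : WeakDual ℝ (E →L[ℝ] ℝ)) ((c ^ (1/p)) • x)| ^ p
          = c * |(ψ : WeakDual ℝ (E →L[ℝ] ℝ)) x| ^ p := by
        rw [_root_.map_smul, smul_eq_mul, abs_mul, abs_of_nonneg hc1,
          Real.mul_rpow hc1 (abs_nonneg _), hcp']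
      rw [e1, e2]; ring
    simp only [ContinuousMap.add_apply, ContinuousMap.smul_apply, smul_eq_mul]
    rw [hFFapp, hFFapp, hFFapp, Fin.sum_univ_add]
    simp only [Fin.append_left, Fin.append_right]
    rw [Finset.mul_sum, Finset.mul_sum]
    congr 1
    · exact Finset.sum_congr rfl fun k _ => (hterm a ha (xs₁ k)).symm
    · exact Finset.sum_congr rfl fun k _ => (hterm b hb (xs₂ k)).symm
  have hBconv : Convex ℝ B := by
    rintro h₁ hh₁ h₂ hh₂ a b ha hb hab
    intro ψ
    simp only [ContinuousMap.add_apply, ContinuousMap.smul_apply, smul_eq_mul]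
    rcases eq_or_lt_of_le ha with rfl | ha'
    · have hb1 : b = 1 := by linarith
      rw [hb1]
      simpa using hh₂ ψ
    · have h1 : 0 < a * h₁ ψ := mul_pos ha' (hh₁ ψ)
      have h2 : 0 ≤ b * h₂ ψ := mul_nonneg hb (hh₂ ψ).le
      linarith
  have hBopen : IsOpen B := by
    rw [Metric.isOpen_iff]
    intro h hh
    obtain ⟨z, _, hz⟩ := isCompact_univ.exists_isMinOn univ_nonempty
      h.continuous.continuousOn
    have hz0 : 0 < h z := hh z
    refine ⟨h z, hz0, fun h' hh' => ?_⟩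
    intro ψ
    have h1 : |h' ψ - h ψ| ≤ ‖h' - h‖ := by
      have h2 := (h' - h).norm_coe_le_norm ψ
      simpa [Real.norm_eq_abs] using h2
    have h2 : ‖h' - h‖ < h z := by rwa [Metric.mem_ball, dist_eq_norm] at hh'
    have h3 : h z ≤ h ψ := (isMinOn_iff.mp hz) ψ (Set.mem_univ ψ)
    have h4 := (abs_le.mp h1).1
    linarith
  have hdisj : Disjoint B A := by
    rw [Set.disjoint_left]
    rintro g hgB ⟨n, xs, rfl⟩
    obtain ⟨ψ0, hψ0, hkey⟩ := key2 n xs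
    have h1 : 0 < FF n xs ⟨ψ0, hψ0⟩ := hgB ⟨ψ0, hψ0⟩
    rw [hFFapp] at h1
    have h2 : ∑ k, (f (xs k) ^ p - C ^ p * |ψ0 (xs k)| ^ p) ≤ 0 := by
      rw [Finset.sum_sub_distrib, ← Finset.mul_sum]
      linarith
    exact absurd h1 (not_lt.mpr h2)
  obtain ⟨L, u, hBlt, hAge⟩ := geometric_hahn_banach_open hBconv hBopen hAconv hdisj
  have hone : (1 : C(bidualBall E, ℝ)) ∈ B := fun ψ => by
    simpa using zero_lt_one
  have hu0 : u ≤ 0 := by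
    have := hAge 0 hA0mem
    simpa using this
  have hu0' : 0 ≤ u := by
    by_contra hu
    push_neg at hu
    rcases le_or_gt 0 (L 1) with hL | hL
    · have := hBlt 1 hone; linarith
    · have hc : 0 < u / (2 * L 1) := div_pos_of_neg_of_neg hu (by linarith)
      have hmem : (u / (2 * L 1)) • (1 : C(bidualBall E, ℝ)) ∈ B := fun ψ => by
        simp only [ContinuousMap.smul_apply, ContinuousMap.one_apply, smul_eq_mul, mul_one]
        exact hc
      have h1 := hBlt _ hmem
      rw [_root_.map_smul, smul_eq_mul] at h1
      have hL1 : L (1 : C(bidualBall E, ℝ)) ≠ 0 := ne_of_lt hL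
      have hcalc : u / (2 * L 1) * L 1 = u / 2 := by field_simp
      rw [hcalc] at h1
      linarith
  have huz : u = 0 := le_antisymm hu0 hu0'
  have hL1neg : L 1 < 0 := by
    have := hBlt 1 hone
    rwa [huz] at this
  set τ : ℝ := -L 1 with hτdef
  have hτ : 0 < τ := by simp [hτdef]; linarith
  set T' : C(bidualBall E, ℝ) →ₗ[ℝ] ℝ := τ⁻¹ • (-(L : C(bidualBall E, ℝ) →ₗ[ℝ] ℝ)) with hT'
  have hT'app : ∀ g : C(bidualBall E, ℝ), T' g = τ⁻¹ * (-(L g)) := fun g => rfl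
  have hT'1 : T' 1 = 1 := by
    rw [hT'app]
    show τ⁻¹ * (-(L 1)) = 1
    rw [← hτdef]
    exact inv_mul_cancel₀ (ne_of_gt hτ)
  have hT'pos : ∀ g : C(bidualBall E, ℝ), (∀ ψ, 0 ≤ g ψ) → 0 ≤ T' g := by
    intro g hg
    have hLg : L g ≤ 0 := by
      by_contra h
      push_neg at h
      set ε := L g / (2 * τ) with hεdef
      have hε : 0 < ε := div_pos h (by linarith)
      have hmem : g + ε • (1 : C(bidualBall E, ℝ)) ∈ B := fun ψ => by
        simp only [ContinuousMap.add_apply, ContinuousMap.smul_apply,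
          ContinuousMap.one_apply, smul_eq_mul, mul_one]
        have := hg ψ
        linarith
      have h1 := hBlt _ hmem
      rw [map_add, _root_.map_smul, smul_eq_mul, huz] at h1
      have hcalc : ε * L 1 = -(L g) / 2 := by
        rw [hεdef]
        have : L (1 : C(bidualBall E, ℝ)) = -τ := by rw [hτdef]; ring
        rw [this]
        field_simp
      rw [hcalc] at h1
      linarith
    rw [hT'app]
    have : 0 ≤ -(L g) := by linarith
    exact mul_nonneg (inv_nonneg.mpr hτ.le) this
  have hT'A : ∀ (n : ℕ) (xs : Fin n → E →L[ℝ] ℝ), T' (FF n xs) ≤ 0 := by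
    intro n xs
    have h1 : u ≤ L (FF n xs) := hAge _ ⟨n, xs, rfl⟩
    rw [huz] at h1
    rw [hT'app]
    have : -(L (FF n xs)) ≤ 0 := by linarith
    exact mul_nonpos_of_nonneg_of_nonpos (inv_nonneg.mpr hτ.le) this
  -- Step 4: the Riesz measure
  obtain ⟨μ, hμprob, hμreg, hμint⟩ := rmk_lite T' hT'pos hT'1
  refine ⟨μ, hμprob, hμreg, fun φ => ?_⟩
  -- Step 5: conclusion
  set hphi : C(bidualBall E, ℝ) :=
    ⟨fun ψ => |(ψ : WeakDual ℝ (E →L[ℝ] ℝ)) φ| ^ p,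
     ((WeakDual.eval_continuous φ).comp continuous_subtype_val).abs.rpow_const
       fun _ => Or.inr hp0.le⟩ with hhphi
  have hphi_nonneg : ∀ ψ, 0 ≤ hphi ψ := fun ψ => Real.rpow_nonneg (abs_nonneg _) _
  have hFF1 : FF 1 ![φ] = (f φ ^ p) • (1 : C(bidualBall E, ℝ)) - (C ^ p) • hphi := by
    ext ψ
    rw [hFFapp]
    simp only [Fin.sum_univ_one, Matrix.cons_val_zero, ContinuousMap.sub_apply,
      ContinuousMap.smul_apply, ContinuousMap.one_apply, smul_eq_mul, mul_one, hhphi,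
      ContinuousMap.coe_mk]
  have hTA := hT'A 1 ![φ]
  rw [hFF1, map_sub, _root_.map_smul, _root_.map_smul, hT'1, smul_eq_mul, smul_eq_mul, mul_one] at hTA
  have hint := hμint hphi hphi_nonneg
  have hCp : (0:ℝ) ≤ C ^ p := Real.rpow_nonneg hC0 _
  have h1 : f φ ^ p ≤ C ^ p * ∫ ψ, hphi ψ ∂μ := by
    have h2 := mul_le_mul_of_nonneg_left hint hCp
    linarith
  have hI0 : 0 ≤ ∫ ψ, hphi ψ ∂μ := integral_nonneg hphi_nonneg
  have hfinal : f φ ≤ C * (∫ ψ, hphi ψ ∂μ) ^ (1/p) := by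
    calc f φ = (f φ ^ p) ^ (1/p) := by
          rw [← Real.rpow_mul (hpos φ), mul_one_div_cancel hpne, Real.rpow_one]
      _ ≤ (C ^ p * ∫ ψ, hphi ψ ∂μ) ^ (1/p) :=
          Real.rpow_le_rpow (Real.rpow_nonneg (hpos φ) _) h1 (by positivity)
      _ = C * (∫ ψ, hphi ψ ∂μ) ^ (1/p) := by
          rw [Real.mul_rpow hCp hI0, ← Real.rpow_mul hC0, mul_one_div_cancel hpne,
            Real.rpow_one]
  have : muFun p μ φ = (∫ ψ, hphi ψ ∂μ) ^ (1/p) := rfl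
  rw [this]
  exact hfinal
end
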